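/- arXiv:2107.00069 — 11 statements merged into one kernel-verified Lean document; each statement's English description precedes it below -/
import Mathlib

section
/- Let m ≥ 1, let y ∈ ℝᵐ with y ≠ 0, let Δ be a real m×m matrix satisfying the Rayleigh lower bound q₁ with q₁ > −1, let β̂ ≥ 0, c > 0, d ≥ 0, and let f ∈ ℝᵐ with ‖f‖ ≤ c·d. Set b₀ = 1 + q₁, β* = d/b₀, and let ẏ = −β̂·c·(I + Δ)(y/‖y‖) − (I + Δ)y + f. Then 2⟨y, ẏ⟩ ≤ −2·b₀·c·(β̂ − β*)·‖y‖ − 2·b₀·‖y‖². -/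
/-- `Δ` satisfies the Rayleigh lower bound `q₁`: `⟨v, Δv⟩ ≥ q₁‖v‖²` for all `v`. -/
def RayleighLB {m : ℕ} (Δ : EuclideanSpace ℝ (Fin m) →L[ℝ] EuclideanSpace ℝ (Fin m))
    (q₁ : ℝ) : Prop :=
  ∀ v : EuclideanSpace ℝ (Fin m), q₁ * ‖v‖ ^ 2 ≤ (inner ℝ v (Δ v) : ℝ)

theorem statement8 {m : ℕ} (hm : 1 ≤ m)
    (y f yd : EuclideanSpace ℝ (Fin m))
    (Δ : EuclideanSpace ℝ (Fin m) →L[ℝ] EuclideanSpace ℝ (Fin m))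
    (q₁ βhat c d : ℝ) (hq₁ : -1 < q₁) (hΔ : RayleighLB Δ q₁)
    (hβhat : 0 ≤ βhat) (hc : 0 < c) (hd : 0 ≤ d) (hy : y ≠ 0)
    (hf : ‖f‖ ≤ c * d)
    (hyd : yd = -(βhat * c) • ((ContinuousLinearMap.id ℝ (EuclideanSpace ℝ (Fin m)) + Δ)
        (‖y‖⁻¹ • y)) - (ContinuousLinearMap.id ℝ (EuclideanSpace ℝ (Fin m)) + Δ) y + f) :
    2 * (inner ℝ y yd : ℝ) ≤
      -2 * (1 + q₁) * c * (βhat - d / (1 + q₁)) * ‖y‖ - 2 * (1 + q₁) * ‖y‖ ^ 2 := by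
  have hn : (0:ℝ) < ‖y‖ := norm_pos_iff.mpr hy
  have hb : (0:ℝ) < 1 + q₁ := by linarith
  have hA : (1 + q₁) * ‖y‖ ^ 2 ≤ (inner ℝ y (y + Δ y) : ℝ) := by
    have := hΔ y
    rw [inner_add_right, real_inner_self_eq_norm_sq]
    nlinarith
  have hF : (inner ℝ y f : ℝ) ≤ ‖y‖ * (c * d) := by
    calc (inner ℝ y f : ℝ) ≤ ‖y‖ * ‖f‖ := real_inner_le_norm y f
    _ ≤ ‖y‖ * (c * d) := by nlinarith
  set A : ℝ := (inner ℝ y (y + Δ y) : ℝ) with hAdef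
  have key : (inner ℝ y yd : ℝ) = -(βhat * c) * (‖y‖⁻¹ * A) - A + (inner ℝ y f : ℝ) := by
    subst hyd
    simp only [ContinuousLinearMap.add_apply, ContinuousLinearMap.id_apply, map_smul]
    rw [inner_add_right, inner_sub_right, inner_smul_right, real_inner_smul_right]
  rw [key]
  have hAinv : (1 + q₁) * ‖y‖ ≤ ‖y‖⁻¹ * A := by
    rw [← sub_nonneg]
    have h1 : ‖y‖⁻¹ * A - (1 + q₁) * ‖y‖ = ‖y‖⁻¹ * (A - (1 + q₁) * ‖y‖ ^ 2) := by
      field_simp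
    rw [h1]
    exact mul_nonneg (by positivity) (by linarith)
  have hbc : 0 ≤ βhat * c := by positivity
  have hrhs : -2 * (1 + q₁) * c * (βhat - d / (1 + q₁)) * ‖y‖ =
      -2 * ((1 + q₁) * ‖y‖) * (βhat * c) + 2 * (‖y‖ * (c * d)) := by
    field_simp; ring
  rw [hrhs]
  nlinarith [mul_le_mul_of_nonneg_left hAinv hbc]
end

section
/- Let m ≥ 1, α > 0, T_c > 0, d ≥ 0, q₁ > −1, b₀ = 1 + q₁, β* = d/b₀. Let y : [0, ∞) → ℝᵐ and β̂ : [0, ∞) → ℝ be differentiable with y(τ) ≠ 0 for all τ, β̂(0) ≥ 0, β̂'(τ) = α·T_c·e^{−ατ}·‖y(τ)‖, and y'(τ) = −β̂(τ)·α·T_c·e^{−ατ}·(I + Δ(τ))(y(τ)/‖y(τ)‖) − (I + Δ(τ))y(τ) + f̄(τ), where each Δ(τ) satisfies the Rayleigh lower bound q₁ and ‖f̄(τ)‖ ≤ α·T_c·e^{−ατ}·d. Then the Lyapunov function V(τ) = ‖y(τ)‖² + b₀(β̂(τ) − β*)² satisfies V(τ₂) + 2·b₀·∫_{τ₁}^{τ₂}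 ‖y(s)‖² ds ≤ V(τ₁) for all 0 ≤ τ₁ ≤ τ₂; in particular V is nonincreasing on [0, ∞). -/
theorem statement9 {m : ℕ} (hm : 1 ≤ m) (α Tc d q₁ : ℝ)
    (hα : 0 < α) (hTc : 0 < Tc) (hd : 0 ≤ d) (hq₁ : -1 < q₁)
    (y : ℝ → EuclideanSpace ℝ (Fin m)) (βhat : ℝ → ℝ)
    (Δ : ℝ → EuclideanSpace ℝ (Fin m) →L[ℝ] EuclideanSpace ℝ (Fin m))
    (fbar : ℝ → EuclideanSpace ℝ (Fin m))
    (hy0 : ∀ τ ∈ Set.Ici (0 : ℝ), y τ ≠ 0)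
    (hβ0 : 0 ≤ βhat 0)
    (hβ' : ∀ τ ∈ Set.Ici (0 : ℝ),
      HasDerivWithinAt βhat (α * Tc * Real.exp (-α * τ) * ‖y τ‖) (Set.Ici 0) τ)
    (hy' : ∀ τ ∈ Set.Ici (0 : ℝ),
      HasDerivWithinAt y
        (-(βhat τ * (α * Tc * Real.exp (-α * τ))) •
            ((ContinuousLinearMap.id ℝ (EuclideanSpace ℝ (Fin m)) + Δ τ) (‖y τ‖⁻¹ • y τ))
          - (ContinuousLinearMap.id ℝ (EuclideanSpace ℝ (Fin m)) + Δ τ) (y τ)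
          + fbar τ) (Set.Ici 0) τ)
    (hΔ : ∀ τ ∈ Set.Ici (0 : ℝ), RayleighLB (Δ τ) q₁)
    (hfbar : ∀ τ ∈ Set.Ici (0 : ℝ), ‖fbar τ‖ ≤ α * Tc * Real.exp (-α * τ) * d) :
    (∀ τ₁ τ₂ : ℝ, 0 ≤ τ₁ → τ₁ ≤ τ₂ →
      (‖y τ₂‖ ^ 2 + (1 + q₁) * (βhat τ₂ - d / (1 + q₁)) ^ 2)
        + 2 * (1 + q₁) * ∫ s in τ₁..τ₂, ‖y s‖ ^ 2 ≤
      ‖y τ₁‖ ^ 2 + (1 + q₁) * (βhat τ₁ - d / (1 + q₁)) ^ 2) ∧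
    AntitoneOn (fun τ => ‖y τ‖ ^ 2 + (1 + q₁) * (βhat τ - d / (1 + q₁)) ^ 2)
      (Set.Ici 0) := by
  set b : ℝ := 1 + q₁ with hbdef
  have hb : (0:ℝ) < b := by simp only [hbdef]; linarith
  set bs : ℝ := d / b with hbsdef
  have hbbs : b * bs = d := by rw [hbsdef]; field_simp
  -- continuity
  have contY : ContinuousOn y (Set.Ici 0) := fun τ hτ => (hy' τ hτ).continuousWithinAt
  have contβ : ContinuousOn βhat (Set.Ici 0) := fun τ hτ => (hβ' τ hτ).continuousWithinAt
  have conth : ContinuousOn (fun s => ‖y s‖ ^ 2) (Set.Ici 0) := contY.norm.pow 2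
  -- interval integrability
  have hInt : ∀ a ∈ Set.Ici (0:ℝ), ∀ c ∈ Set.Ici (0:ℝ),
      IntervalIntegrable (fun s => ‖y s‖ ^ 2) MeasureTheory.volume a c := by
    intro a ha c hc
    refine (conth.mono ?_).intervalIntegrable
    intro x hx
    exact le_trans (le_min ha hc) hx.1
  -- βhat monotone, hence nonnegative
  have hβmono : MonotoneOn βhat (Set.Ici 0) := by
    refine monotoneOn_of_hasDerivWithinAt_nonneg (f' := fun x => α * Tc * Real.exp (-α * x) * ‖y x‖)
      (convex_Ici 0) contβ ?_ ?_
    · rw [interior_Ici]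
      intro x hx
      exact ((hβ' x (Set.mem_Ici.mpr (le_of_lt hx))).hasDerivAt (Ici_mem_nhds hx)).hasDerivWithinAt
    · intro x _
      positivity
  have hβnn : ∀ τ ∈ Set.Ici (0:ℝ), 0 ≤ βhat τ := fun τ hτ =>
    le_trans hβ0 (hβmono Set.self_mem_Ici hτ hτ)
  -- the Lyapunov-with-integral function
  set W : ℝ → ℝ := fun τ => ‖y τ‖ ^ 2 + b * (βhat τ - bs) ^ 2
      + 2 * b * ∫ s in (0:ℝ)..τ, ‖y s‖ ^ 2 with hWdef
  have contI : ContinuousOn (fun τ => ∫ s in (0:ℝ)..τ, ‖y s‖ ^ 2) (Set.Ici 0) := by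
    intro τ hτ
    have h1 : ContinuousWithinAt (fun u => ∫ s in (0:ℝ)..u, ‖y s‖ ^ 2)
        (Set.Icc 0 (τ + 1)) τ := by
      apply intervalIntegral.continuousWithinAt_primitive (Real.volume_singleton)
      refine (conth.mono ?_).intervalIntegrable
      intro z hz
      exact le_trans (le_min (le_min le_rfl le_rfl) (le_max_left 0 (τ + 1))) hz.1
    refine h1.mono_of_mem_nhdsWithin ?_
    have heq : Set.Icc (0:ℝ) (τ + 1) = Set.Ici 0 ∩ Set.Iic (τ + 1) := by
      rw [Set.Ici_inter_Iic]
    rw [heq]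
    exact Filter.inter_mem self_mem_nhdsWithin
      (mem_nhdsWithin_of_mem_nhds (Iic_mem_nhds (by linarith)))
  have contW : ContinuousOn W (Set.Ici 0) :=
    (conth.add (continuousOn_const.mul ((contβ.sub continuousOn_const).pow 2))).add
      (continuousOn_const.mul contI)
  have hWanti : AntitoneOn W (Set.Ici 0) := by
    refine antitoneOn_of_hasDerivWithinAt_nonpos
      (f' := fun x => 2 * (inner ℝ (y x)
          (-(βhat x * (α * Tc * Real.exp (-α * x))) •
            ((ContinuousLinearMap.id ℝ (EuclideanSpace ℝ (Fin m)) + Δ x) (‖y x‖⁻¹ • y x))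
          - (ContinuousLinearMap.id ℝ (EuclideanSpace ℝ (Fin m)) + Δ x) (y x)
          + fbar x) : ℝ)
        + b * (2 * (βhat x - bs) * (α * Tc * Real.exp (-α * x) * ‖y x‖))
        + 2 * b * ‖y x‖ ^ 2)
      (convex_Ici 0) contW ?_ ?_
    · rw [interior_Ici]
      intro x hx
      have hxI : x ∈ Set.Ici (0:ℝ) := Set.mem_Ici.mpr (le_of_lt hx)
      set Y' := -(βhat x * (α * Tc * Real.exp (-α * x))) •
            ((ContinuousLinearMap.id ℝ (EuclideanSpace ℝ (Fin m)) + Δ x) (‖y x‖⁻¹ • y x))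
          - (ContinuousLinearMap.id ℝ (EuclideanSpace ℝ (Fin m)) + Δ x) (y x)
          + fbar x with hY'
      have hyx : HasDerivAt y Y' x := (hy' x hxI).hasDerivAt (Ici_mem_nhds hx)
      have h1 : HasDerivAt (fun τ => ‖y τ‖ ^ 2) (2 * (inner ℝ (y x) Y' : ℝ)) x := by
        have h0 := hyx.inner ℝ hyx
        simp only [real_inner_self_eq_norm_sq] at h0
        refine h0.congr_deriv ?_
        rw [real_inner_comm Y' (y x)]
        ring
      have hβx : HasDerivAt βhat (α * Tc * Real.exp (-α * x) * ‖y x‖) x :=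
        (hβ' x hxI).hasDerivAt (Ici_mem_nhds hx)
      have h2 : HasDerivAt (fun τ => b * (βhat τ - bs) ^ 2)
          (b * (2 * (βhat x - bs) * (α * Tc * Real.exp (-α * x) * ‖y x‖))) x := by
        have := ((hβx.sub_const bs).pow 2).const_mul b
        refine this.congr_deriv ?_
        ring
      have h3 : HasDerivAt (fun u => 2 * b * ∫ s in (0:ℝ)..u, ‖y s‖ ^ 2)
          (2 * b * ‖y x‖ ^ 2) x := by
        have hmeas : StronglyMeasurableAtFilter (fun s => ‖y s‖ ^ 2) (nhds x)
            MeasureTheory.volume :=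
          ContinuousOn.stronglyMeasurableAtFilter isOpen_Ioi
            (conth.mono (Set.Ioi_subset_Ici le_rfl)) x hx
        have hca : ContinuousAt (fun s => ‖y s‖ ^ 2) x :=
          (conth x hxI).continuousAt (Ici_mem_nhds hx)
        exact (intervalIntegral.integral_hasDerivAt_right
          (hInt 0 Set.self_mem_Ici x hxI) hmeas hca).const_mul (2 * b)
      exact ((h1.add h2).add h3).hasDerivWithinAt
    · rw [interior_Ici]
      intro x hx
      have hxI : x ∈ Set.Ici (0:ℝ) := Set.mem_Ici.mpr (le_of_lt hx)
      have hnpos : (0:ℝ) < ‖y x‖ := norm_pos_iff.mpr (hy0 x hxI)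
      set gx := α * Tc * Real.exp (-α * x) with hgx
      have hgxpos : 0 < gx := by positivity
      have hβ : 0 ≤ βhat x := hβnn x hxI
      have hAge : b * ‖y x‖ ^ 2 ≤
          (inner ℝ (y x) ((ContinuousLinearMap.id ℝ (EuclideanSpace ℝ (Fin m)) + Δ x) (y x)) : ℝ) := by
        have h1 := hΔ x hxI (y x)
        have h2 : (inner ℝ (y x)
            ((ContinuousLinearMap.id ℝ (EuclideanSpace ℝ (Fin m)) + Δ x) (y x)) : ℝ)
            = ‖y x‖ ^ 2 + (inner ℝ (y x) (Δ x (y x)) : ℝ) := by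
          rw [ContinuousLinearMap.add_apply, ContinuousLinearMap.id_apply, inner_add_right,
            real_inner_self_eq_norm_sq]
        rw [h2, hbdef]
        nlinarith [h1]
      have hip : (inner ℝ (y x) (-(βhat x * gx) •
            ((ContinuousLinearMap.id ℝ (EuclideanSpace ℝ (Fin m)) + Δ x) (‖y x‖⁻¹ • y x))
          - (ContinuousLinearMap.id ℝ (EuclideanSpace ℝ (Fin m)) + Δ x) (y x)
          + fbar x) : ℝ)
          = -(βhat x * gx) * (‖y x‖⁻¹ *
              (inner ℝ (y x) ((ContinuousLinearMap.id ℝ (EuclideanSpace ℝ (Fin m)) + Δ x) (y x)) : ℝ))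
            - (inner ℝ (y x) ((ContinuousLinearMap.id ℝ (EuclideanSpace ℝ (Fin m)) + Δ x) (y x)) : ℝ)
            + (inner ℝ (y x) (fbar x) : ℝ) := by
        rw [inner_add_right, inner_sub_right, real_inner_smul_right, map_smul,
          real_inner_smul_right]
      have hCS : (inner ℝ (y x) (fbar x) : ℝ) ≤ ‖y x‖ * (gx * d) := by
        refine le_trans (real_inner_le_norm (y x) (fbar x)) ?_
        have hf := hfbar x hxI
        rw [← hgx] at hf
        nlinarith [norm_nonneg (fbar x), hf, hnpos]
      have hkey : βhat x * gx * (b * ‖y x‖) ≤ βhat x * gx * (‖y x‖⁻¹ *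
          (inner ℝ (y x) ((ContinuousLinearMap.id ℝ (EuclideanSpace ℝ (Fin m)) + Δ x) (y x)) : ℝ)) := by
        have h1 : ‖y x‖⁻¹ * (b * ‖y x‖ ^ 2) ≤ ‖y x‖⁻¹ *
            (inner ℝ (y x) ((ContinuousLinearMap.id ℝ (EuclideanSpace ℝ (Fin m)) + Δ x) (y x)) : ℝ) :=
          mul_le_mul_of_nonneg_left hAge (by positivity)
        have h2 : ‖y x‖⁻¹ * (b * ‖y x‖ ^ 2) = b * ‖y x‖ := by
          field_simp
        rw [h2] at h1
        exact mul_le_mul_of_nonneg_left h1 (by positivity)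
      have hexp : b * (2 * (βhat x - bs) * (gx * ‖y x‖))
          = 2 * (βhat x * gx * (b * ‖y x‖)) - 2 * d * (gx * ‖y x‖) := by
        rw [← hbbs]
        ring
      beta_reduce
      rw [hip, hexp]
      nlinarith [hkey, hCS, hAge]
  have key : ∀ τ₁ τ₂ : ℝ, 0 ≤ τ₁ → τ₁ ≤ τ₂ →
      (‖y τ₂‖ ^ 2 + b * (βhat τ₂ - bs) ^ 2)
        + 2 * b * ∫ s in τ₁..τ₂, ‖y s‖ ^ 2 ≤
      ‖y τ₁‖ ^ 2 + b * (βhat τ₁ - bs) ^ 2 := by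
    intro τ₁ τ₂ h1 h2
    have h2' : (0:ℝ) ≤ τ₂ := le_trans h1 h2
    have hw : (‖y τ₂‖ ^ 2 + b * (βhat τ₂ - bs) ^ 2 + 2 * b * ∫ s in (0:ℝ)..τ₂, ‖y s‖ ^ 2)
        ≤ ‖y τ₁‖ ^ 2 + b * (βhat τ₁ - bs) ^ 2 + 2 * b * ∫ s in (0:ℝ)..τ₁, ‖y s‖ ^ 2 :=
      hWanti h1 h2' h2
    have hsplit : (∫ s in (0:ℝ)..τ₁, ‖y s‖ ^ 2) + ∫ s in τ₁..τ₂, ‖y s‖ ^ 2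
        = ∫ s in (0:ℝ)..τ₂, ‖y s‖ ^ 2 :=
      intervalIntegral.integral_add_adjacent_intervals
        (hInt 0 Set.self_mem_Ici τ₁ h1) (hInt τ₁ h1 τ₂ h2')
    have hsplit2 : 2 * b * (∫ s in (0:ℝ)..τ₁, ‖y s‖ ^ 2) + 2 * b * ∫ s in τ₁..τ₂, ‖y s‖ ^ 2
        = 2 * b * ∫ s in (0:ℝ)..τ₂, ‖y s‖ ^ 2 := by rw [← hsplit]; ring
    linarith
  constructor
  · exact key
  · intro a ha c hc hac
    have h1 := key a c ha hac
    have h2 : 0 ≤ ∫ s in a..c, ‖y s‖ ^ 2 :=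
      intervalIntegral.integral_nonneg hac (fun s _ => by positivity)
    simp only
    nlinarith [h1, h2, hb]
end

section
/- Let m ≥ 1, α > 0, T_c > 0, d ≥ 0, q₁ > −1, b₀ = 1 + q₁, β* = d/b₀. Let y : [0, ∞) → ℝᵐ and β̂ : [0, ∞) → ℝ be differentiable with y(τ) ≠ 0 for all τ, β̂(0) ≥ 0, β̂'(τ) = α·T_c·e^{−ατ}·‖y(τ)‖, and y'(τ) = −β̂(τ)·α·T_c·e^{−ατ}·(I + Δ(τ))(y(τ)/‖y(τ)‖) − (I + Δ(τ))y(τ) + f̄(τ), where each Δ(τ) satisfies the Rayleigh lower bound q₁ and ‖f̄(τ)‖ ≤ α·T_c·e^{−ατ}·d. Then y is square-integrable on [0, ∞) with ∫_{0}^{∞} ‖y(s)‖² ds ≤ (‖y(0)‖² + b₀(β̂(0) − β*)²)/(2·b₀). -/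
set_option maxHeartbeats 1000000 in
theorem statement10 {m : ℕ} (hm : 1 ≤ m) (α Tc d q₁ : ℝ)
    (hα : 0 < α) (hTc : 0 < Tc) (hd : 0 ≤ d) (hq₁ : -1 < q₁)
    (y : ℝ → EuclideanSpace ℝ (Fin m)) (βhat : ℝ → ℝ)
    (Δ : ℝ → EuclideanSpace ℝ (Fin m) →L[ℝ] EuclideanSpace ℝ (Fin m))
    (fbar : ℝ → EuclideanSpace ℝ (Fin m))
    (hy0 : ∀ τ ∈ Set.Ici (0 : ℝ), y τ ≠ 0)
    (hβ0 : 0 ≤ βhat 0)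
    (hβ' : ∀ τ ∈ Set.Ici (0 : ℝ),
      HasDerivWithinAt βhat (α * Tc * Real.exp (-α * τ) * ‖y τ‖) (Set.Ici 0) τ)
    (hy' : ∀ τ ∈ Set.Ici (0 : ℝ),
      HasDerivWithinAt y
        (-(βhat τ * (α * Tc * Real.exp (-α * τ))) •
            ((ContinuousLinearMap.id ℝ (EuclideanSpace ℝ (Fin m)) + Δ τ) (‖y τ‖⁻¹ • y τ))
          - (ContinuousLinearMap.id ℝ (EuclideanSpace ℝ (Fin m)) + Δ τ) (y τ)
          + fbar τ) (Set.Ici 0) τ)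
    (hΔ : ∀ τ ∈ Set.Ici (0 : ℝ), RayleighLB (Δ τ) q₁)
    (hfbar : ∀ τ ∈ Set.Ici (0 : ℝ), ‖fbar τ‖ ≤ α * Tc * Real.exp (-α * τ) * d) :
    MeasureTheory.IntegrableOn (fun s => ‖y s‖ ^ 2) (Set.Ioi (0 : ℝ)) ∧
    ∫ s in Set.Ioi (0 : ℝ), ‖y s‖ ^ 2 ≤
      (‖y 0‖ ^ 2 + (1 + q₁) * (βhat 0 - d / (1 + q₁)) ^ 2) / (2 * (1 + q₁)) := by
  classical
  set b0 : ℝ := 1 + q₁ with hb0def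
  have hb0 : 0 < b0 := by simp only [hb0def]; linarith
  set βs : ℝ := d / b0 with hβsdef
  -- derivative of y as a function
  set D : ℝ → EuclideanSpace ℝ (Fin m) := fun τ =>
    -(βhat τ * (α * Tc * Real.exp (-α * τ))) •
        ((ContinuousLinearMap.id ℝ (EuclideanSpace ℝ (Fin m)) + Δ τ) (‖y τ‖⁻¹ • y τ))
      - (ContinuousLinearMap.id ℝ (EuclideanSpace ℝ (Fin m)) + Δ τ) (y τ)
      + fbar τ with hDdef
  have hyD : ∀ τ ∈ Set.Ici (0 : ℝ), HasDerivWithinAt y (D τ) (Set.Ici 0) τ := by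
    intro τ hτ
    simp only [hDdef]
    exact hy' τ hτ
  -- continuity
  clear_value b0 βs D
  have hycont : ContinuousOn y (Set.Ici 0) := fun τ hτ => (hy' τ hτ).continuousWithinAt
  have hq : ContinuousOn (fun s => ‖y s‖ ^ 2) (Set.Ici (0:ℝ)) := (hycont.norm).pow 2
  have hInt : ∀ T : ℝ, MeasureTheory.IntegrableOn (fun s => ‖y s‖ ^ 2) (Set.Ioc 0 T) := by
    intro T
    rcases le_or_gt T 0 with hT | hT
    · rw [Set.Ioc_eq_empty (by exact fun h => absurd (h.trans_le hT) (lt_irrefl 0))]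
      exact MeasureTheory.integrableOn_empty
    · exact ((hq.mono (Set.Icc_subset_Ici_self (a := T) (b := (0:ℝ)))).integrableOn_Icc).mono_set
        Set.Ioc_subset_Icc_self
  have hII : ∀ T : ℝ, 0 ≤ T → IntervalIntegrable (fun s => ‖y s‖ ^ 2)
      MeasureTheory.volume 0 T := by
    intro T hT
    rw [intervalIntegrable_iff_integrableOn_Ioc_of_le hT]
    exact hInt T
  -- βhat is nonnegative on Ici 0
  have hβcont : ContinuousOn βhat (Set.Ici 0) := fun τ hτ => (hβ' τ hτ).continuousWithinAt
  have hβmono : MonotoneOn βhat (Set.Ici (0:ℝ)) := by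
    apply monotoneOn_of_hasDerivWithinAt_nonneg (convex_Ici 0) hβcont
      (f' := fun τ => α * Tc * Real.exp (-α * τ) * ‖y τ‖)
    · intro x hx
      rw [interior_Ici] at hx ⊢
      exact (hβ' x (Set.Ioi_subset_Ici_self hx)).mono Set.Ioi_subset_Ici_self
    · intro x _
      positivity
  have hβnn : ∀ τ ∈ Set.Ici (0:ℝ), 0 ≤ βhat τ :=
    fun τ hτ => hβ0.trans (hβmono Set.self_mem_Ici hτ hτ)
  -- Lyapunov function
  set F : ℝ → ℝ := fun τ => (‖y τ‖ ^ 2 + b0 * (βhat τ - βs) ^ 2) / 2 +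
      b0 * ∫ s in (0:ℝ)..τ, ‖y s‖ ^ 2 with hFdef
  set C0 : ℝ := (‖y 0‖ ^ 2 + b0 * (βhat 0 - βs) ^ 2) / 2 with hC0def
  clear_value F C0
  -- key decrease property
  have key : ∀ T : ℝ, 0 ≤ T → F T ≤ F 0 := by
    intro T hT
    have hmono : MonotoneOn (fun τ => -F τ) (Set.Icc 0 T) := by
      apply monotoneOn_of_hasDerivWithinAt_nonneg (convex_Icc 0 T)
        (f' := fun x => -((((inner ℝ (y x) (D x) : ℝ) + (inner ℝ (D x) (y x) : ℝ))
            + b0 * (2 * (βhat x - βs) * (α * Tc * Real.exp (-α * x) * ‖y x‖))) / 2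
          + b0 * ‖y x‖ ^ 2))
      · -- continuity of -F on Icc 0 T
        simp only [hFdef]
        apply ContinuousOn.neg
        apply ContinuousOn.add
        · exact (((hq.mono Set.Icc_subset_Ici_self).add (continuousOn_const.mul
            (((hβcont.mono Set.Icc_subset_Ici_self).sub continuousOn_const).pow 2))).div_const 2)
        · apply continuousOn_const.mul
          have := intervalIntegral.continuousOn_primitive_interval
            (f := fun s => ‖y s‖ ^ 2) (μ := MeasureTheory.volume) (a := 0) (b := T) ?hi
          · simpa [Set.uIcc_of_le hT] using this
          · rw [Set.uIcc_of_le hT]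
            exact (hq.mono Set.Icc_subset_Ici_self).integrableOn_Icc
      · -- derivative of -F
        intro x hx
        rw [interior_Icc] at hx ⊢
        have hx0 : (0:ℝ) < x := hx.1
        have hxI : x ∈ Set.Ici (0:ℝ) := hx0.le
        have hsub : Set.Ioo (0:ℝ) T ⊆ Set.Ici 0 := fun s hs => hs.1.le
        have hA : HasDerivWithinAt (fun t => ‖y t‖ ^ 2)
            ((inner ℝ (y x) (D x) : ℝ) + (inner ℝ (D x) (y x) : ℝ)) (Set.Ioo 0 T) x := by
          have h := ((hyD x hxI).inner ℝ (hyD x hxI)).mono hsub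
          simpa only [real_inner_self_eq_norm_sq] using h
        have hB : HasDerivWithinAt (fun t => (βhat t - βs) ^ 2)
            (2 * (βhat x - βs) * (α * Tc * Real.exp (-α * x) * ‖y x‖)) (Set.Ioo 0 T) x := by
          have h := (((hβ' x hxI).sub_const βs).pow 2).mono hsub
          norm_num at h
          exact h.congr_deriv (by ring)
        have hPrim : HasDerivWithinAt (fun u => ∫ s in (0:ℝ)..u, ‖y s‖ ^ 2)
            (‖y x‖ ^ 2) (Set.Ioo 0 T) x := by
          have hmeas := ContinuousOn.stronglyMeasurableAtFilter (μ := MeasureTheory.volume)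
            isOpen_Ioi (hq.mono Set.Ioi_subset_Ici_self) x hx0
          have hcontAt : ContinuousAt (fun s => ‖y s‖ ^ 2) x :=
            hq.continuousAt (Ici_mem_nhds hx0)
          exact (intervalIntegral.integral_hasDerivAt_right (hII x hx0.le) hmeas
            hcontAt).hasDerivWithinAt
        simp only [hFdef]
        exact (((hA.add (hB.const_mul b0)).div_const 2).add (hPrim.const_mul b0)).neg
      · -- nonpositivity of the derivative of F
        intro x hx
        rw [interior_Icc] at hx
        have hx0 : (0:ℝ) < x := hx.1
        have hxI : x ∈ Set.Ici (0:ℝ) := hx0.le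
        have hn : (0:ℝ) < ‖y x‖ := norm_pos_iff.2 (hy0 x hxI)
        set gx : ℝ := α * Tc * Real.exp (-α * x) with hgx
        set Pv : ℝ := inner ℝ (y x) (y x + Δ x (y x)) with hPv
        clear_value gx Pv
        have hgx0 : 0 < gx := by rw [hgx]; positivity
        have hPval : Pv = ‖y x‖ ^ 2 + (inner ℝ (y x) (Δ x (y x)) : ℝ) := by
          rw [hPv, inner_add_right, real_inner_self_eq_norm_sq]
        have hPge : b0 * ‖y x‖ ^ 2 ≤ Pv := by
          have := hΔ x hxI (y x)
          rw [hPval, hb0def]; nlinarith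
        have hDx : D x = -(βhat x * gx) • (‖y x‖⁻¹ • (y x + Δ x (y x)))
            - (y x + Δ x (y x)) + fbar x := by
          simp [hDdef, ContinuousLinearMap.add_apply, ContinuousLinearMap.id_apply, map_smul,
            smul_smul, hgx]
        have hiD : (inner ℝ (y x) (D x) : ℝ) =
            -(βhat x * gx) * (‖y x‖⁻¹ * Pv) - Pv + (inner ℝ (y x) (fbar x) : ℝ) := by
          rw [hDx, inner_add_right, inner_sub_right, real_inner_smul_right,
            real_inner_smul_right, ← hPv]
        have hi2 : (inner ℝ (D x) (y x) : ℝ) = (inner ℝ (y x) (D x) : ℝ) := real_inner_comm _ _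
        -- bound on the drive term
        have hc : 0 ≤ βhat x * gx := mul_nonneg (hβnn x hxI) hgx0.le
        have hinv : ‖y x‖⁻¹ * (b0 * ‖y x‖ ^ 2) = b0 * ‖y x‖ := by
          field_simp
        have hstep : b0 * ‖y x‖ ≤ ‖y x‖⁻¹ * Pv := by
          have h := mul_le_mul_of_nonneg_left hPge (inv_nonneg.2 hn.le)
          rwa [hinv] at h
        have hmul := mul_le_mul_of_nonneg_left hstep hc
        -- bound on the disturbance term
        have hf : (inner ℝ (y x) (fbar x) : ℝ) ≤ ‖y x‖ * (gx * d) := by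
          have h1 := real_inner_le_norm (y x) (fbar x)
          have h2 := hfbar x hxI
          rw [← hgx] at h2
          nlinarith [norm_nonneg (y x)]
        have h3 : b0 * βs * (gx * ‖y x‖) = d * (gx * ‖y x‖) := by
          have : b0 * βs = d := by
            rw [hβsdef]; field_simp
          rw [this]
        linarith [hmul, hPge, hf, h3, hiD, hi2]
    have h := hmono (Set.left_mem_Icc.2 hT) (Set.right_mem_Icc.2 hT) hT
    have h' : -F 0 ≤ -F T := h
    linarith
  have hF0 : F 0 = C0 := by
    simp [hFdef, hC0def, intervalIntegral.integral_same]
  have hVnn : ∀ T : ℝ, 0 ≤ (‖y T‖ ^ 2 + b0 * (βhat T - βs) ^ 2) / 2 := by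
    intro T
    have h1 : 0 ≤ b0 * (βhat T - βs) ^ 2 := mul_nonneg hb0.le (sq_nonneg _)
    have h2 : 0 ≤ ‖y T‖ ^ 2 := sq_nonneg _
    linarith
  have hbound : ∀ T : ℝ, 0 ≤ T → (∫ s in (0:ℝ)..T, ‖y s‖ ^ 2) ≤ C0 / b0 := by
    intro T hT
    have h := key T hT
    rw [hF0] at h
    have h2 : b0 * ∫ s in (0:ℝ)..T, ‖y s‖ ^ 2 ≤ C0 := by
      have := hVnn T
      simp only [hFdef] at h
      linarith
    rw [le_div_iff₀ hb0]
    linarith [h2]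
  -- integrability on Ioi 0
  have hIoi : MeasureTheory.IntegrableOn (fun s => ‖y s‖ ^ 2) (Set.Ioi (0 : ℝ)) := by
    apply MeasureTheory.integrableOn_Ioi_of_intervalIntegral_norm_bounded (C0 / b0) 0
      (fun i : ℝ => hInt i) Filter.tendsto_id
    filter_upwards [Filter.eventually_ge_atTop (0:ℝ)] with i hi
    have : (∫ x in (0:ℝ)..i, ‖(‖y x‖ ^ 2)‖) = ∫ x in (0:ℝ)..i, ‖y x‖ ^ 2 := by
      congr 1
      funext x
      simp [abs_of_nonneg (sq_nonneg ‖y x‖)]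
    rw [this]
    exact hbound i hi
  refine ⟨hIoi, ?_⟩
  -- pass to the limit
  have htend := MeasureTheory.intervalIntegral_tendsto_integral_Ioi 0 hIoi Filter.tendsto_id
  have hlim : (∫ s in Set.Ioi (0:ℝ), ‖y s‖ ^ 2) ≤ C0 / b0 := by
    apply le_of_tendsto htend
    filter_upwards [Filter.eventually_ge_atTop (0:ℝ)] with i hi
    exact hbound i hi
  have : C0 / b0 = (‖y 0‖ ^ 2 + b0 * (βhat 0 - βs) ^ 2) / (2 * b0) := by
    rw [hC0def, div_div]
  rw [this] at hlim
  exact hlim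
end

section
/- Let m ≥ 1, α > 0, T_c > 0, d ≥ 0, q₁ > −1, b₀ = 1 + q₁, β* = d/b₀. Let y : [0, ∞) → ℝᵐ and β̂ : [0, ∞) → ℝ be differentiable with y(τ) ≠ 0 for all τ, β̂(0) ≥ 0, β̂'(τ) = α·T_c·e^{−ατ}·‖y(τ)‖, and y'(τ) = −β̂(τ)·α·T_c·e^{−ατ}·(I + Δ(τ))(y(τ)/‖y(τ)‖) − (I + Δ(τ))y(τ) + f̄(τ), where each Δ(τ) satisfies the Rayleigh lower bound q₁ and ‖f̄(τ)‖ ≤ α·T_c·e^{−ατ}·d. Then the adaptive gain remains bounded: β̂(τ) ≤ β* + √((‖y(0)‖² + b₀(β̂(0) − β*)²)/b₀) for all τ ≥ 0. -/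
set_option maxHeartbeats 1000000

/-- Arithmetic core of the Lyapunov derivative estimate. -/
lemma lyap_arith (b₀ g n β βs d P F : ℝ) (hb₀ : 0 < b₀) (hg : 0 < g) (hn : 0 < n)
    (hβ : 0 ≤ β) (hP : b₀ * n ^ 2 ≤ P) (hF : F ≤ n * (g * d)) (hβs : b₀ * βs = d) :
    ((-(β * g) * (n⁻¹ * P) - P + F) + (-(β * g) * (n⁻¹ * P) - P + F))
      + b₀ * (2 * (β - βs) ^ 1 * (g * n)) ≤ 0 := by
  have hinv : n⁻¹ * n ^ 2 = n := by field_simp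
  have h1 : -(β * g) * (n⁻¹ * P) ≤ -(β * g) * (b₀ * n) := by
    have h2 : (β * g * n⁻¹) * (b₀ * n ^ 2) ≤ (β * g * n⁻¹) * P :=
      mul_le_mul_of_nonneg_left hP (by positivity)
    have h3 : (β * g * n⁻¹) * (b₀ * n ^ 2) = (β * g) * (b₀ * n) := by
      rw [mul_comm b₀ (n ^ 2)]
      field_simp
    nlinarith [h2, h3]
  have hexp : b₀ * (2 * (β - βs) ^ 1 * (g * n)) = 2 * (β * g) * (b₀ * n) - 2 * d * (g * n) := by
    rw [← hβs]; ring
  rw [hexp]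
  nlinarith [h1, hP, hF]

theorem statement11 {m : ℕ} (hm : 1 ≤ m) (α Tc d q₁ : ℝ)
    (hα : 0 < α) (hTc : 0 < Tc) (hd : 0 ≤ d) (hq₁ : -1 < q₁)
    (y : ℝ → EuclideanSpace ℝ (Fin m)) (βhat : ℝ → ℝ)
    (Δ : ℝ → EuclideanSpace ℝ (Fin m) →L[ℝ] EuclideanSpace ℝ (Fin m))
    (fbar : ℝ → EuclideanSpace ℝ (Fin m))
    (hy0 : ∀ τ ∈ Set.Ici (0 : ℝ), y τ ≠ 0)
    (hβ0 : 0 ≤ βhat 0)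
    (hβ' : ∀ τ ∈ Set.Ici (0 : ℝ),
      HasDerivWithinAt βhat (α * Tc * Real.exp (-α * τ) * ‖y τ‖) (Set.Ici 0) τ)
    (hy' : ∀ τ ∈ Set.Ici (0 : ℝ),
      HasDerivWithinAt y
        (-(βhat τ * (α * Tc * Real.exp (-α * τ))) •
            ((ContinuousLinearMap.id ℝ (EuclideanSpace ℝ (Fin m)) + Δ τ) (‖y τ‖⁻¹ • y τ))
          - (ContinuousLinearMap.id ℝ (EuclideanSpace ℝ (Fin m)) + Δ τ) (y τ)
          + fbar τ) (Set.Ici 0) τ)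
    (hΔ : ∀ τ ∈ Set.Ici (0 : ℝ), RayleighLB (Δ τ) q₁)
    (hfbar : ∀ τ ∈ Set.Ici (0 : ℝ), ‖fbar τ‖ ≤ α * Tc * Real.exp (-α * τ) * d) :
    ∀ τ ≥ (0 : ℝ), βhat τ ≤ d / (1 + q₁) +
      Real.sqrt ((‖y 0‖ ^ 2 + (1 + q₁) * (βhat 0 - d / (1 + q₁)) ^ 2) / (1 + q₁)) := by
  set b₀ : ℝ := 1 + q₁ with hb₀def
  have hb₀ : 0 < b₀ := by linarith
  set βs : ℝ := d / b₀ with hβsdef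
  set g : ℝ → ℝ := fun τ => α * Tc * Real.exp (-α * τ) with hgdef
  have hg : ∀ τ : ℝ, 0 < g τ := fun τ => by positivity
  -- βhat is monotone on Ici 0
  have hβmono : MonotoneOn βhat (Set.Ici 0) := by
    apply monotoneOn_of_hasDerivWithinAt_nonneg (convex_Ici 0)
      (f' := fun τ => g τ * ‖y τ‖)
      (fun τ hτ => (hβ' τ hτ).continuousWithinAt)
    · intro τ hτ
      simp only [interior_Ici] at hτ ⊢
      exact (hβ' τ (Set.mem_Ici.mpr (le_of_lt hτ))).mono (Set.Ioi_subset_Ici le_rfl)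
    · intro τ _
      positivity
  have hβnn : ∀ τ ∈ Set.Ici (0 : ℝ), 0 ≤ βhat τ := fun τ hτ =>
    le_trans hβ0 (hβmono (Set.mem_Ici.mpr (le_refl 0)) hτ hτ)
  -- Lyapunov function
  set V : ℝ → ℝ := fun τ => ‖y τ‖ ^ 2 + b₀ * (βhat τ - βs) ^ 2 with hVdef
  set D : ℝ → EuclideanSpace ℝ (Fin m) := fun τ =>
    -(βhat τ * (α * Tc * Real.exp (-α * τ))) •
            ((ContinuousLinearMap.id ℝ (EuclideanSpace ℝ (Fin m)) + Δ τ) (‖y τ‖⁻¹ • y τ))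
          - (ContinuousLinearMap.id ℝ (EuclideanSpace ℝ (Fin m)) + Δ τ) (y τ)
          + fbar τ with hDdef
  set V' : ℝ → ℝ := fun τ =>
    ((inner ℝ (y τ) (D τ) : ℝ) + (inner ℝ (D τ) (y τ) : ℝ)) +
      b₀ * (2 * (βhat τ - βs) ^ 1 * (g τ * ‖y τ‖)) with hV'def
  have hV' : ∀ τ ∈ Set.Ici (0 : ℝ), HasDerivWithinAt V (V' τ) (Set.Ici 0) τ := by
    intro τ hτ
    have h1 : HasDerivWithinAt (fun t => (inner ℝ (y t) (y t) : ℝ))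
        ((inner ℝ (y τ) (D τ) : ℝ) + (inner ℝ (D τ) (y τ) : ℝ)) (Set.Ici 0) τ :=
      (hy' τ hτ).inner ℝ (hy' τ hτ)
    have h1' : HasDerivWithinAt (fun t => ‖y t‖ ^ 2)
        ((inner ℝ (y τ) (D τ) : ℝ) + (inner ℝ (D τ) (y τ) : ℝ)) (Set.Ici 0) τ := by
      have : (fun t => ‖y t‖ ^ 2) = fun t => (inner ℝ (y t) (y t) : ℝ) := by
        funext t; rw [real_inner_self_eq_norm_sq]
      rw [this]; exact h1
    have h2 : HasDerivWithinAt (fun t => b₀ * (βhat t - βs) ^ 2)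
        (b₀ * (2 * (βhat τ - βs) ^ 1 * (g τ * ‖y τ‖))) (Set.Ici 0) τ :=
      (((hβ' τ hτ).sub_const βs).pow 2).const_mul b₀
    exact h1'.add h2
  -- V' is nonpositive on Ici 0
  have hV'le : ∀ τ ∈ Set.Ici (0 : ℝ), V' τ ≤ 0 := by
    intro τ hτ
    have hyne := hy0 τ hτ
    have hyn : 0 < ‖y τ‖ := norm_pos_iff.mpr hyne
    set A := ContinuousLinearMap.id ℝ (EuclideanSpace ℝ (Fin m)) + Δ τ with hA
    have hP : b₀ * ‖y τ‖ ^ 2 ≤ (inner ℝ (y τ) (A (y τ)) : ℝ) := by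
      have h := hΔ τ hτ (y τ)
      have heq : (inner ℝ (y τ) (A (y τ)) : ℝ)
          = ‖y τ‖ ^ 2 + (inner ℝ (y τ) (Δ τ (y τ)) : ℝ) := by
        rw [hA, ContinuousLinearMap.add_apply, ContinuousLinearMap.id_apply,
          inner_add_right, real_inner_self_eq_norm_sq]
      rw [heq, hb₀def]; nlinarith
    have hsmul : (inner ℝ (y τ) (A (‖y τ‖⁻¹ • y τ)) : ℝ)
        = ‖y τ‖⁻¹ * (inner ℝ (y τ) (A (y τ)) : ℝ) := by
      rw [map_smul, real_inner_smul_right]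
    have hinnerD : (inner ℝ (y τ) (D τ) : ℝ)
        = -(βhat τ * g τ) * (‖y τ‖⁻¹ * (inner ℝ (y τ) (A (y τ)) : ℝ))
          - (inner ℝ (y τ) (A (y τ)) : ℝ) + (inner ℝ (y τ) (fbar τ) : ℝ) := by
      rw [← hsmul]
      simp only [hDdef, inner_add_right, inner_sub_right, real_inner_smul_right]
      rfl
    have hf : (inner ℝ (y τ) (fbar τ) : ℝ) ≤ ‖y τ‖ * (g τ * d) := by
      calc (inner ℝ (y τ) (fbar τ) : ℝ) ≤ ‖y τ‖ * ‖fbar τ‖ := real_inner_le_norm _ _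
        _ ≤ ‖y τ‖ * (g τ * d) := by
            have h1 := hfbar τ hτ
            have h2 : α * Tc * Real.exp (-α * τ) * d = g τ * d := by rw [hgdef]
            rw [← h2]
            exact mul_le_mul_of_nonneg_left h1 hyn.le
    have hβτ := hβnn τ hτ
    have hβsb : b₀ * βs = d := by
      rw [hβsdef]; field_simp
    have hsymm : (inner ℝ (D τ) (y τ) : ℝ) = (inner ℝ (y τ) (D τ) : ℝ) := real_inner_comm _ _
    show ((inner ℝ (y τ) (D τ) : ℝ) + (inner ℝ (D τ) (y τ) : ℝ)) +
      b₀ * (2 * (βhat τ - βs) ^ 1 * (g τ * ‖y τ‖)) ≤ 0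
    rw [hsymm, hinnerD]
    exact lyap_arith b₀ (g τ) (‖y τ‖) (βhat τ) βs d _ _ hb₀ (hg τ) hyn hβτ hP hf hβsb
  -- V is antitone on Ici 0
  have hVanti : AntitoneOn V (Set.Ici 0) := by
    apply antitoneOn_of_hasDerivWithinAt_nonpos (convex_Ici 0) (f' := V')
      (fun τ hτ => (hV' τ hτ).continuousWithinAt)
    · intro τ hτ
      simp only [interior_Ici] at hτ ⊢
      exact (hV' τ (Set.mem_Ici.mpr (le_of_lt hτ))).mono (Set.Ioi_subset_Ici le_rfl)
    · intro τ hτ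
      simp only [interior_Ici] at hτ
      exact hV'le τ (Set.mem_Ici.mpr (le_of_lt hτ))
  intro τ hτ
  have hVle : V τ ≤ V 0 := hVanti (Set.mem_Ici.mpr (le_refl 0)) hτ hτ
  have hsq : (βhat τ - βs) ^ 2 ≤ V 0 / b₀ := by
    have h1 : b₀ * (βhat τ - βs) ^ 2 ≤ V τ := by
      have : V τ = ‖y τ‖ ^ 2 + b₀ * (βhat τ - βs) ^ 2 := rfl
      nlinarith [sq_nonneg ‖y τ‖, this]
    rw [le_div_iff₀ hb₀]; nlinarith
  have hfin : βhat τ - βs ≤ Real.sqrt (V 0 / b₀) := by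
    rcases le_or_gt (βhat τ - βs) 0 with h | h
    · exact le_trans h (Real.sqrt_nonneg _)
    · rw [show βhat τ - βs = Real.sqrt ((βhat τ - βs) ^ 2) by
        rw [Real.sqrt_sq h.le]]
      exact Real.sqrt_le_sqrt hsq
  have hVeq : V 0 / b₀ = (‖y 0‖ ^ 2 + (1 + q₁) * (βhat 0 - d / (1 + q₁)) ^ 2) / (1 + q₁) := by
    rfl
  rw [← hVeq]
  have hβseq : βs = d / (1 + q₁) := rfl
  linarith [hfin, hβseq.symm.le]
end

section
/- Let m ≥ 1, α > 0, T_c > 0, d ≥ 0, q₁ > −1 and 0 ≤ q < 1. Let y : [0, ∞) → ℝᵐ and β̂ : [0, ∞) → ℝ be differentiable with y(τ) ≠ 0 for all τ, β̂(0) ≥ 0, β̂'(τ) = α·T_c·e^{−ατ}·‖y(τ)‖, and y'(τ) = −β̂(τ)·α·T_c·e^{−ατ}·(I + Δ(τ))(y(τ)/‖y(τ)‖) − (I + Δ(τ))y(τ) + f̄(τ), where each Δ(τ) satisfies the Rayleigh lower bound q₁, the operator norm of each Δ(τ) is at most q, and ‖f̄(τ)‖ ≤ α·T_c·e^{−ατ}·d.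 Then ‖y(τ)‖ → 0 as τ → ∞. -/
set_option maxHeartbeats 1000000 in
theorem statement12 {m : ℕ} (hm : 1 ≤ m) (α Tc d q₁ : ℝ)
    (hα : 0 < α) (hTc : 0 < Tc) (hd : 0 ≤ d) (hq₁ : -1 < q₁) (q : ℝ) (hq0 : 0 ≤ q) (hq1 : q < 1)
    (y : ℝ → EuclideanSpace ℝ (Fin m)) (βhat : ℝ → ℝ)
    (Δ : ℝ → EuclideanSpace ℝ (Fin m) →L[ℝ] EuclideanSpace ℝ (Fin m))
    (fbar : ℝ → EuclideanSpace ℝ (Fin m))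
    (hy0 : ∀ τ ∈ Set.Ici (0 : ℝ), y τ ≠ 0)
    (hβ0 : 0 ≤ βhat 0)
    (hβ' : ∀ τ ∈ Set.Ici (0 : ℝ),
      HasDerivWithinAt βhat (α * Tc * Real.exp (-α * τ) * ‖y τ‖) (Set.Ici 0) τ)
    (hy' : ∀ τ ∈ Set.Ici (0 : ℝ),
      HasDerivWithinAt y
        (-(βhat τ * (α * Tc * Real.exp (-α * τ))) •
            ((ContinuousLinearMap.id ℝ (EuclideanSpace ℝ (Fin m)) + Δ τ) (‖y τ‖⁻¹ • y τ))
          - (ContinuousLinearMap.id ℝ (EuclideanSpace ℝ (Fin m)) + Δ τ) (y τ)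
          + fbar τ) (Set.Ici 0) τ)
    (hΔ : ∀ τ ∈ Set.Ici (0 : ℝ), RayleighLB (Δ τ) q₁)
    (hΔnorm : ∀ τ ∈ Set.Ici (0 : ℝ), ‖Δ τ‖ ≤ q)
    (hfbar : ∀ τ ∈ Set.Ici (0 : ℝ), ‖fbar τ‖ ≤ α * Tc * Real.exp (-α * τ) * d) :
    Filter.Tendsto (fun τ => ‖y τ‖) Filter.atTop (nhds 0) := by
  set c : ℝ := 1 + q₁ with hcdef
  have hc0 : 0 < c := by simp only [hcdef]; linarith
  set μ : ℝ := min c α / 2 with hμdef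
  have hμ0 : 0 < μ := half_pos (lt_min hc0 hα)
  have hμc : μ ≤ c := by
    have := min_le_left c α; simp only [hμdef]; linarith
  have hμα : 2 * μ ≤ α := by
    have := min_le_right c α; simp only [hμdef]; linarith
  -- βhat is nonnegative on Ici 0
  have hβmono : MonotoneOn βhat (Set.Ici 0) := by
    apply monotoneOn_of_hasDerivWithinAt_nonneg (convex_Ici 0)
      (fun τ hτ => (hβ' τ hτ).continuousWithinAt)
      (fun τ hτ => (hβ' τ (interior_subset hτ)).mono interior_subset)
    intro x _
    positivity
  have hβnn : ∀ τ ∈ Set.Ici (0 : ℝ), 0 ≤ βhat τ := fun τ hτ =>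
    hβ0.trans (hβmono Set.self_mem_Ici hτ hτ)
  -- notation for the derivative of y
  set z : ℝ → EuclideanSpace ℝ (Fin m) := fun τ =>
    -(βhat τ * (α * Tc * Real.exp (-α * τ))) •
        ((ContinuousLinearMap.id ℝ (EuclideanSpace ℝ (Fin m)) + Δ τ) (‖y τ‖⁻¹ • y τ))
      - (ContinuousLinearMap.id ℝ (EuclideanSpace ℝ (Fin m)) + Δ τ) (y τ)
      + fbar τ with hzdef
  have hrpos : ∀ τ ∈ Set.Ici (0 : ℝ), (0 : ℝ) < ‖y τ‖ := fun τ hτ =>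
    norm_pos_iff.mpr (hy0 τ hτ)
  -- key inner product estimate
  have hinner : ∀ τ ∈ Set.Ici (0 : ℝ),
      (inner ℝ (y τ) (z τ) : ℝ) ≤ -c * ‖y τ‖ ^ 2 + ‖y τ‖ * (α * Tc * Real.exp (-α * τ) * d) := by
    intro τ hτ
    have hr0 : (0 : ℝ) < ‖y τ‖ := hrpos τ hτ
    have hA : q₁ * ‖y τ‖ ^ 2 ≤ (inner ℝ (y τ) (Δ τ (y τ)) : ℝ) := hΔ τ hτ (y τ)
    have hk : 0 ≤ βhat τ * (α * Tc * Real.exp (-α * τ)) :=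
      mul_nonneg (hβnn τ hτ) (by positivity)
    have expand : (inner ℝ (y τ) (z τ) : ℝ) =
        -(βhat τ * (α * Tc * Real.exp (-α * τ))) *
            (‖y τ‖⁻¹ * (‖y τ‖ ^ 2 + (inner ℝ (y τ) (Δ τ (y τ)) : ℝ)))
          - (‖y τ‖ ^ 2 + (inner ℝ (y τ) (Δ τ (y τ)) : ℝ)) + (inner ℝ (y τ) (fbar τ) : ℝ) := by
      simp only [hzdef, inner_sub_right, inner_add_right, real_inner_smul_right,
        ContinuousLinearMap.add_apply, ContinuousLinearMap.id_apply, map_smul,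
        real_inner_self_eq_norm_sq]
      all_goals ring
    have h1 : 0 ≤ ‖y τ‖ ^ 2 + (inner ℝ (y τ) (Δ τ (y τ)) : ℝ) := by
      nlinarith [sq_nonneg ‖y τ‖]
    have h2 : c * ‖y τ‖ ^ 2 ≤ ‖y τ‖ ^ 2 + (inner ℝ (y τ) (Δ τ (y τ)) : ℝ) := by
      simp only [hcdef]; nlinarith
    have h3 : (inner ℝ (y τ) (fbar τ) : ℝ) ≤ ‖y τ‖ * (α * Tc * Real.exp (-α * τ) * d) :=
      (real_inner_le_norm _ _).trans
        (mul_le_mul_of_nonneg_left (hfbar τ hτ) (norm_nonneg _))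
    have t1 : -(βhat τ * (α * Tc * Real.exp (-α * τ))) *
        (‖y τ‖⁻¹ * (‖y τ‖ ^ 2 + (inner ℝ (y τ) (Δ τ (y τ)) : ℝ))) ≤ 0 := by
      rw [neg_mul]
      exact neg_nonpos_of_nonneg
        (mul_nonneg hk (mul_nonneg (inv_nonneg.mpr hr0.le) h1))
    rw [expand]
    linarith
  -- derivative of the norm
  have hr' : ∀ τ ∈ Set.Ici (0 : ℝ),
      HasDerivWithinAt (fun t => ‖y t‖)
        (((inner ℝ (y τ) (z τ) : ℝ) + (inner ℝ (z τ) (y τ) : ℝ)) / (2 * ‖y τ‖))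
        (Set.Ici 0) τ := by
    intro τ hτ
    have hVne : (inner ℝ (y τ) (y τ) : ℝ) ≠ 0 := by
      rw [real_inner_self_eq_norm_mul_norm]
      exact mul_ne_zero (norm_ne_zero_iff.mpr (hy0 τ hτ)) (norm_ne_zero_iff.mpr (hy0 τ hτ))
    have H := ((hy' τ hτ).inner ℝ (hy' τ hτ)).sqrt hVne
    have hnorm_eq : (fun t => Real.sqrt (inner ℝ (y t) (y t) : ℝ)) = fun t => ‖y t‖ :=
      funext fun t => by
        rw [real_inner_self_eq_norm_mul_norm, Real.sqrt_mul_self (norm_nonneg _)]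
    have hs : Real.sqrt (inner ℝ (y τ) (y τ) : ℝ) = ‖y τ‖ := by
      rw [real_inner_self_eq_norm_mul_norm, Real.sqrt_mul_self (norm_nonneg _)]
    rw [hnorm_eq, hs] at H
    exact H
  -- Lyapunov function
  set g : ℝ → ℝ := fun τ => Real.exp (μ * τ) * ‖y τ‖ + α * Tc * d / μ * Real.exp (-μ * τ)
    with hgdef
  set G' : ℝ → ℝ := fun τ =>
    Real.exp (μ * τ) * μ * ‖y τ‖ +
      Real.exp (μ * τ) * (((inner ℝ (y τ) (z τ) : ℝ) + (inner ℝ (z τ) (y τ) : ℝ)) / (2 * ‖y τ‖)) +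
      α * Tc * d / μ * (Real.exp (-μ * τ) * -μ) with hG'def
  have hg' : ∀ τ ∈ Set.Ici (0 : ℝ), HasDerivWithinAt g (G' τ) (Set.Ici 0) τ := by
    intro τ hτ
    have e1 : HasDerivAt (fun t => Real.exp (μ * t)) (Real.exp (μ * τ) * μ) τ := by
      simpa using ((hasDerivAt_id τ).const_mul μ).exp
    have e2 : HasDerivAt (fun t => Real.exp (-μ * t)) (Real.exp (-μ * τ) * -μ) τ := by
      simpa using ((hasDerivAt_id τ).const_mul (-μ)).exp
    exact (e1.hasDerivWithinAt.mul (hr' τ hτ)).add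
      (e2.hasDerivWithinAt.const_mul (α * Tc * d / μ))
  have hG'le : ∀ τ ∈ Set.Ici (0 : ℝ), G' τ ≤ 0 := by
    intro τ hτ
    have hτ0 : (0 : ℝ) ≤ τ := hτ
    have hr0 : (0 : ℝ) < ‖y τ‖ := hrpos τ hτ
    have hE : (0 : ℝ) < Real.exp (μ * τ) := Real.exp_pos _
    have hcomm : (inner ℝ (z τ) (y τ) : ℝ) = (inner ℝ (y τ) (z τ) : ℝ) := real_inner_comm _ _
    have hdiv : ((inner ℝ (y τ) (z τ) : ℝ) + (inner ℝ (z τ) (y τ) : ℝ)) / (2 * ‖y τ‖) =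
        (inner ℝ (y τ) (z τ) : ℝ) / ‖y τ‖ := by
      rw [hcomm]
      field_simp
      ring
    have hrd : ((inner ℝ (y τ) (z τ) : ℝ) + (inner ℝ (z τ) (y τ) : ℝ)) / (2 * ‖y τ‖) ≤
        -c * ‖y τ‖ + α * Tc * Real.exp (-α * τ) * d := by
      rw [hdiv, div_le_iff₀ hr0]
      nlinarith [hinner τ hτ]
    have hEe : Real.exp (μ * τ) * Real.exp (-α * τ) ≤ Real.exp (-μ * τ) := by
      rw [← Real.exp_add]
      apply Real.exp_le_exp.mpr
      nlinarith
    have hlast : α * Tc * d / μ * (Real.exp (-μ * τ) * -μ) =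
        -(α * Tc * d * Real.exp (-μ * τ)) := by
      field_simp
    simp only [hG'def]
    rw [hlast]
    show Real.exp (μ * τ) * μ * ‖y τ‖ +
        Real.exp (μ * τ) *
          (((inner ℝ (y τ) (z τ) : ℝ) + (inner ℝ (z τ) (y τ) : ℝ)) / (2 * ‖y τ‖)) +
        -(α * Tc * d * Real.exp (-μ * τ)) ≤ 0
    have hb1 : Real.exp (μ * τ) *
        (((inner ℝ (y τ) (z τ) : ℝ) + (inner ℝ (z τ) (y τ) : ℝ)) / (2 * ‖y τ‖)) ≤
        Real.exp (μ * τ) * (-c * ‖y τ‖ + α * Tc * Real.exp (-α * τ) * d) :=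
      mul_le_mul_of_nonneg_left hrd hE.le
    have hb2 : α * Tc * d * (Real.exp (μ * τ) * Real.exp (-α * τ)) ≤
        α * Tc * d * Real.exp (-μ * τ) :=
      mul_le_mul_of_nonneg_left hEe (by positivity)
    have hb3 : Real.exp (μ * τ) * ‖y τ‖ * μ ≤ Real.exp (μ * τ) * ‖y τ‖ * c :=
      mul_le_mul_of_nonneg_left hμc (mul_pos hE hr0).le
    have key : Real.exp (μ * τ) * μ * ‖y τ‖ +
        Real.exp (μ * τ) * (-c * ‖y τ‖ + α * Tc * Real.exp (-α * τ) * d) -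
        α * Tc * d * Real.exp (-μ * τ) ≤ 0 := by nlinarith [hb2, hb3]
    exact le_trans (add_le_add (add_le_add le_rfl hb1) le_rfl) (by linarith [key])
  have hganti : AntitoneOn g (Set.Ici 0) := by
    apply antitoneOn_of_hasDerivWithinAt_nonpos (convex_Ici 0)
      (fun τ hτ => (hg' τ hτ).continuousWithinAt)
    · intro x hx
      rw [interior_Ici] at hx ⊢
      exact (hg' x (Set.Ioi_subset_Ici_self hx)).mono Set.Ioi_subset_Ici_self
    · intro x hx
      rw [interior_Ici] at hx
      exact hG'le x (Set.Ioi_subset_Ici_self hx)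
  have hbound : ∀ τ : ℝ, 0 ≤ τ → ‖y τ‖ ≤ g 0 * Real.exp (-μ * τ) := by
    intro τ hτ
    have hgle : g τ ≤ g 0 := hganti Set.self_mem_Ici hτ hτ
    have hterm : 0 ≤ α * Tc * d / μ * Real.exp (-μ * τ) := by positivity
    have h1 : Real.exp (μ * τ) * ‖y τ‖ ≤ g 0 := by
      simp only [hgdef] at hgle ⊢; linarith
    have hEe : Real.exp (μ * τ) * Real.exp (-μ * τ) = 1 := by
      rw [← Real.exp_add]; simp [neg_mul]
    have hem : (0 : ℝ) < Real.exp (-μ * τ) := Real.exp_pos _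
    have h2 : Real.exp (-μ * τ) * (Real.exp (μ * τ) * ‖y τ‖) = ‖y τ‖ := by
      rw [← mul_assoc, mul_comm (Real.exp (-μ * τ)) (Real.exp (μ * τ)), hEe, one_mul]
    nlinarith [mul_le_mul_of_nonneg_left h1 hem.le, h2]
  have hlim : Filter.Tendsto (fun τ => g 0 * Real.exp (-μ * τ)) Filter.atTop (nhds 0) := by
    have h1 : Filter.Tendsto (fun τ : ℝ => μ * τ) Filter.atTop Filter.atTop :=
      Filter.Tendsto.const_mul_atTop hμ0 Filter.tendsto_id
    have h2 : Filter.Tendsto (fun τ : ℝ => Real.exp (-(μ * τ))) Filter.atTop (nhds 0) :=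
      Real.tendsto_exp_neg_atTop_nhds_zero.comp h1
    have h3 : Filter.Tendsto (fun τ : ℝ => g 0 * Real.exp (-(μ * τ))) Filter.atTop
        (nhds (g 0 * 0)) := h2.const_mul (g 0)
    simpa [neg_mul, mul_zero] using h3
  exact squeeze_zero' (Filter.Eventually.of_forall fun τ => norm_nonneg _)
    ((Filter.eventually_ge_atTop 0).mono hbound) hlim
end

section
/- (Lemma 1, for classical solutions.) Let m ≥ 1, α ∈ (0, 1), T_c > 0, ε > 0, d ≥ 0, q₁ > −1 and 0 ≤ q < 1. Let σ : [0, T_c) → ℝᵐ and β̂ : [0, T_c) → ℝ be differentiable with ‖σ(0)‖ > ε/2, β̂(0) ≥ 0, β̂'(t) = ‖σ(t)‖ for all t, and such that at every t ∈ [0, T_c) with σ(t) ≠ 0 one has σ'(t) = −(β̂(t) + ‖σ(t)‖/(α(T_c − t)))·(I + Δ(t))(σ(t)/‖σ(t)‖) + f(t), where each Δ(t) satisfies the Rayleigh lower bound q₁, the operator norm of each Δ(t) is at most q, and ‖f(t)‖ ≤ d for all t. Then there exists t̄ ∈ (0, T_c) such that ‖σ(t̄)‖ = ε/2. -/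
set_option maxHeartbeats 1000000 in
theorem statement13 {m : ℕ} (hm : 1 ≤ m) (α Tc ε d q₁ q : ℝ)
    (hα : α ∈ Set.Ioo (0 : ℝ) 1) (hTc : 0 < Tc) (hε : 0 < ε) (hd : 0 ≤ d)
    (hq₁ : -1 < q₁) (hq0 : 0 ≤ q) (hq1 : q < 1)
    (σ : ℝ → EuclideanSpace ℝ (Fin m)) (βhat : ℝ → ℝ)
    (Δ : ℝ → EuclideanSpace ℝ (Fin m) →L[ℝ] EuclideanSpace ℝ (Fin m))
    (f : ℝ → EuclideanSpace ℝ (Fin m))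
    (hσ0 : ε / 2 < ‖σ 0‖) (hβ0 : 0 ≤ βhat 0)
    (hσdiff : DifferentiableOn ℝ σ (Set.Ico 0 Tc))
    (hβ' : ∀ t ∈ Set.Ico (0 : ℝ) Tc,
      HasDerivWithinAt βhat ‖σ t‖ (Set.Ico 0 Tc) t)
    (hσ' : ∀ t ∈ Set.Ico (0 : ℝ) Tc, σ t ≠ 0 →
      HasDerivWithinAt σ
        (-(βhat t + ‖σ t‖ / (α * (Tc - t))) •
            ((ContinuousLinearMap.id ℝ (EuclideanSpace ℝ (Fin m)) + Δ t)
              (‖σ t‖⁻¹ • σ t)) + f t) (Set.Ico 0 Tc) t)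
    (hΔ : ∀ t ∈ Set.Ico (0 : ℝ) Tc, RayleighLB (Δ t) q₁)
    (hΔnorm : ∀ t ∈ Set.Ico (0 : ℝ) Tc, ‖Δ t‖ ≤ q)
    (hf : ∀ t ∈ Set.Ico (0 : ℝ) Tc, ‖f t‖ ≤ d) :
    ∃ tbar ∈ Set.Ioo (0 : ℝ) Tc, ‖σ tbar‖ = ε / 2 := by
  obtain ⟨hα0, hα1⟩ := hα
  by_contra hcon
  push_neg at hcon
  -- the norm stays strictly above ε/2 on [0, Tc)
  have hcontn : ContinuousOn (fun t => ‖σ t‖) (Set.Ico 0 Tc) := hσdiff.continuousOn.norm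
  have hbig : ∀ t ∈ Set.Ico (0:ℝ) Tc, ε / 2 < ‖σ t‖ := by
    intro t ht
    by_contra hle
    push_neg at hle
    have ht0 : 0 < t := by
      rcases eq_or_lt_of_le ht.1 with h | h
      · exfalso; rw [← h] at hle; linarith
      · exact h
    have hmem : ε / 2 ∈ (fun s => ‖σ s‖) '' Set.Icc 0 t := by
      apply intermediate_value_Icc' ht0.le
        (hcontn.mono (Set.Icc_subset_Ico_right ht.2))
      exact ⟨hle, hσ0.le⟩
    obtain ⟨s, hs, hse⟩ := hmem
    have hs0 : 0 < s := by
      rcases eq_or_lt_of_le hs.1 with h | h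
      · exfalso; rw [← h] at hse; simp only at hse; linarith
      · exact h
    exact hcon s ⟨hs0, lt_of_le_of_lt hs.2 ht.2⟩ hse
  -- βhat is nonnegative on [0, Tc)
  have hβmono : MonotoneOn βhat (Set.Ico 0 Tc) := by
    apply monotoneOn_of_deriv_nonneg (convex_Ico 0 Tc)
    · intro t ht; exact (hβ' t ht).continuousWithinAt
    · rw [interior_Ico]
      intro t ht
      exact ((hβ' t ⟨ht.1.le, ht.2⟩).hasDerivAt
        (Ico_mem_nhds ht.1 ht.2)).differentiableAt.differentiableWithinAt
    · rw [interior_Ico]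
      intro t ht
      rw [((hβ' t ⟨ht.1.le, ht.2⟩).hasDerivAt (Ico_mem_nhds ht.1 ht.2)).deriv]
      positivity
  have hβnn : ∀ t ∈ Set.Ico (0:ℝ) Tc, 0 ≤ βhat t := fun t ht =>
    le_trans hβ0 (hβmono ⟨le_refl 0, hTc⟩ ht ht.1)
  -- constants
  set C0 : ℝ := (1 + q₁) * ε / (2 * α) with hC0def
  have hC0 : 0 < C0 := by
    apply div_pos (by nlinarith) (by linarith)
  set t0 : ℝ := max 0 (Tc - C0 / (d + 1)) with ht0def
  have ht00 : 0 ≤ t0 := le_max_left _ _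
  have ht0Tc : t0 < Tc := by
    apply max_lt hTc
    have : 0 < C0 / (d + 1) := by positivity
    linarith
  -- key pointwise derivative bound on (t0, Tc)
  have key : ∀ t ∈ Set.Ioo t0 Tc, ∃ D : ℝ,
      HasDerivAt (fun s => ‖σ s‖ ^ 2) D t ∧ D ≤ ε * d - ε * C0 / (Tc - t) := by
    intro t ht
    have ht0lt : (0:ℝ) < t := lt_of_le_of_lt ht00 ht.1
    have htI : t ∈ Set.Ico (0:ℝ) Tc := ⟨ht0lt.le, ht.2⟩
    have hn : ε / 2 < ‖σ t‖ := hbig t htI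
    have hnpos : 0 < ‖σ t‖ := by linarith
    have hσne : σ t ≠ 0 := by
      intro h; rw [h, norm_zero] at hnpos; exact lt_irrefl 0 hnpos
    set τ : ℝ := Tc - t with hτdef
    have hτ : 0 < τ := by simp only [hτdef]; linarith [ht.2]
    set n : ℝ := ‖σ t‖ with hndef
    set V : EuclideanSpace ℝ (Fin m) :=
      -(βhat t + n / (α * τ)) •
        ((ContinuousLinearMap.id ℝ (EuclideanSpace ℝ (Fin m)) + Δ t)
          (n⁻¹ • σ t)) + f t with hVdef
    have hder : HasDerivAt σ V t :=
      (hσ' t htI hσne).hasDerivAt (Ico_mem_nhds ht0lt ht.2)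
    have hφ : HasDerivAt (fun s => ‖σ s‖ ^ 2)
        ((inner ℝ (σ t) V : ℝ) + (inner ℝ V (σ t) : ℝ)) t := by
      have := hder.inner ℝ hder
      simpa only [real_inner_self_eq_norm_sq] using this
    refine ⟨_, hφ, ?_⟩
    have hcomm : (inner ℝ V (σ t) : ℝ) = (inner ℝ (σ t) V : ℝ) := real_inner_comm _ _
    rw [hcomm]
    -- bound inner (σ t) V
    have hX : (inner ℝ (σ t)
        ((ContinuousLinearMap.id ℝ (EuclideanSpace ℝ (Fin m)) + Δ t) (n⁻¹ • σ t)) : ℝ)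
        = n⁻¹ * (n ^ 2 + (inner ℝ (σ t) (Δ t (σ t)) : ℝ)) := by
      simp only [ContinuousLinearMap.add_apply, ContinuousLinearMap.id_apply, map_smul,
        inner_add_right, real_inner_smul_right, real_inner_self_eq_norm_sq, ← hndef]
    have hΔb : q₁ * n ^ 2 ≤ (inner ℝ (σ t) (Δ t (σ t)) : ℝ) := hΔ t htI (σ t)
    have hXlb : (1 + q₁) * n ≤ (inner ℝ (σ t)
        ((ContinuousLinearMap.id ℝ (EuclideanSpace ℝ (Fin m)) + Δ t) (n⁻¹ • σ t)) : ℝ) := by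
      rw [hX]
      have h1 : (1 + q₁) * n = n⁻¹ * (n ^ 2 + q₁ * n ^ 2) := by
        field_simp
      rw [h1]
      apply mul_le_mul_of_nonneg_left (by linarith) (by positivity)
    have hfb : (inner ℝ (σ t) (f t) : ℝ) ≤ n * d := by
      calc (inner ℝ (σ t) (f t) : ℝ) ≤ ‖σ t‖ * ‖f t‖ := real_inner_le_norm _ _
        _ ≤ n * d := by
            apply mul_le_mul_of_nonneg_left (hf t htI) hnpos.le
    set K : ℝ := (1 + q₁) / (α * τ) with hKdef
    have hK : 0 < K := by apply div_pos (by linarith) (by positivity)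
    have hc' : 0 ≤ n / (α * τ) := by positivity
    have hc : n / (α * τ) ≤ βhat t + n / (α * τ) := by linarith [hβnn t htI]
    have hKn : n / (α * τ) * ((1 + q₁) * n) = K * n ^ 2 := by
      simp only [hKdef]; field_simp
    have hIV : (inner ℝ (σ t) V : ℝ) ≤ n * d - K * n ^ 2 := by
      have hexp : (inner ℝ (σ t) V : ℝ) =
          -(βhat t + n / (α * τ)) * (inner ℝ (σ t)
            ((ContinuousLinearMap.id ℝ (EuclideanSpace ℝ (Fin m)) + Δ t) (n⁻¹ • σ t)) : ℝ)
          + (inner ℝ (σ t) (f t) : ℝ) := by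
        simp only [hVdef, inner_add_right, real_inner_smul_right]
      rw [hexp]
      have hXnn : (0:ℝ) ≤ (inner ℝ (σ t)
          ((ContinuousLinearMap.id ℝ (EuclideanSpace ℝ (Fin m)) + Δ t) (n⁻¹ • σ t)) : ℝ) := by
        have : (0:ℝ) ≤ (1 + q₁) * n := by nlinarith
        linarith [hXlb]
      nlinarith [mul_le_mul_of_nonneg_right hc hXnn,
        mul_le_mul_of_nonneg_left hXlb hc']
    -- combine
    have hd0 : d ≤ K * (ε / 2) := by
      have hτle : τ ≤ C0 / (d + 1) := by
        have := ht.1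
        simp only [ht0def] at this
        have h2 : Tc - C0 / (d + 1) < t := lt_of_le_of_lt (le_max_right _ _) this
        simp only [hτdef]; linarith
      have hdτ : d * τ ≤ C0 := by
        have h3 : τ * (d + 1) ≤ C0 := (le_div_iff₀ (by linarith : (0:ℝ) < d + 1)).mp hτle
        nlinarith
      have hC0τ : C0 / τ = K * (ε / 2) := by
        simp only [hC0def, hKdef]
        field_simp
      rw [← hC0τ]
      rw [le_div_iff₀ hτ]
      linarith
    have hεC0τ : ε * C0 / (Tc - t) = ε * (K * (ε / 2)) := by
      have : (Tc - t) = τ := rfl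
      rw [this]
      simp only [hC0def, hKdef]
      field_simp
    rw [hεC0τ]
    have hfinal : n * d - K * n ^ 2 ≤ (ε / 2) * d - K * (ε / 2) ^ 2 := by
      nlinarith [mul_nonneg (by linarith : (0:ℝ) ≤ n - ε / 2)
        (by nlinarith : (0:ℝ) ≤ K * (n + ε / 2) - d)]
    nlinarith [hIV]
  -- the auxiliary function g is antitone on [t0, Tc)
  set g : ℝ → ℝ := fun s => ‖σ s‖ ^ 2 - ε * d * s - ε * C0 * Real.log (Tc - s) with hgdef
  have hganti : AntitoneOn g (Set.Ico t0 Tc) := by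
    apply antitoneOn_of_deriv_nonpos (convex_Ico t0 Tc)
    · apply ContinuousOn.sub
      apply ContinuousOn.sub
      · have : ContinuousOn (fun s => ‖σ s‖ ^ 2) (Set.Ico 0 Tc) := by
          exact (hσdiff.continuousOn.norm).pow 2
        exact this.mono (Set.Ico_subset_Ico_left ht00)
      · exact (continuous_const.mul continuous_id).continuousOn
      · apply ContinuousOn.mul continuousOn_const
        apply ContinuousOn.log (continuousOn_const.sub continuous_id.continuousOn)
        intro s hs h'
        simp only [Pi.sub_apply, id_eq] at h'
        have : s < Tc := hs.2
        linarith
    · rw [interior_Ico]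
      intro t ht
      obtain ⟨D, hD, _⟩ := key t ht
      have hlog : HasDerivAt (fun s => Real.log (Tc - s)) ((-1) / (Tc - t)) t := by
        have h1 : HasDerivAt (fun s : ℝ => Tc - s) (-1) t := (hasDerivAt_id t).const_sub Tc
        exact h1.log (by linarith [ht.2] : Tc - t ≠ 0)
      exact ((hD.sub ((hasDerivAt_id t).const_mul (ε * d))).sub
        (hlog.const_mul (ε * C0))).differentiableAt.differentiableWithinAt
    · rw [interior_Ico]
      intro t ht
      obtain ⟨D, hD, hDb⟩ := key t ht
      have hlog : HasDerivAt (fun s => Real.log (Tc - s)) ((-1) / (Tc - t)) t := by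
        have h1 : HasDerivAt (fun s : ℝ => Tc - s) (-1) t := (hasDerivAt_id t).const_sub Tc
        exact h1.log (by linarith [ht.2] : Tc - t ≠ 0)
      have hg' : HasDerivAt g (D - ε * d * 1 - ε * C0 * ((-1) / (Tc - t))) t :=
        (hD.sub ((hasDerivAt_id t).const_mul (ε * d))).sub (hlog.const_mul (ε * C0))
      rw [hg'.deriv]
      have hτ : 0 < Tc - t := by linarith [ht.2]
      have : ε * C0 * ((-1) / (Tc - t)) = -(ε * C0 / (Tc - t)) := by ring
      rw [this]
      have : ε * C0 / (Tc - t) = ε * C0 / (Tc - t) := rfl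
      linarith [hDb]
  -- pick t1 close to Tc to get a contradiction
  have hεC0 : 0 < ε * C0 := by positivity
  set B : ℝ := ((ε / 2) ^ 2 - g t0 - ε * d * Tc - 1) / (ε * C0) with hBdef
  set δ : ℝ := min ((Tc - t0) / 2) (Real.exp B) with hδdef
  have hδ0 : 0 < δ := lt_min (by linarith) (Real.exp_pos B)
  set t1 : ℝ := Tc - δ with ht1def
  have ht1a : t0 < t1 := by
    have : δ ≤ (Tc - t0) / 2 := min_le_left _ _
    simp only [ht1def]; linarith
  have ht1b : t1 < Tc := by simp only [ht1def]; linarith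
  have hgle : g t1 ≤ g t0 :=
    hganti ⟨le_refl t0, ht0Tc⟩ ⟨ht1a.le, ht1b⟩ ht1a.le
  have hlogδ : Real.log δ ≤ B := by
    calc Real.log δ ≤ Real.log (Real.exp B) :=
          Real.log_le_log hδ0 (min_le_right _ _)
      _ = B := Real.log_exp B
  have hTct1 : Tc - t1 = δ := by simp only [ht1def]; ring
  have hφt1 : (ε / 2) ^ 2 < ‖σ t1‖ ^ 2 := by
    have := hbig t1 ⟨by linarith, ht1b⟩
    nlinarith
  have hgt1 : g t1 = ‖σ t1‖ ^ 2 - ε * d * t1 - ε * C0 * Real.log δ := by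
    simp only [hgdef, hTct1]
  have hBmul : ε * C0 * B = (ε / 2) ^ 2 - g t0 - ε * d * Tc - 1 := by
    simp only [hBdef]
    field_simp
  have hdt1 : ε * d * t1 ≤ ε * d * Tc := by
    apply mul_le_mul_of_nonneg_left ht1b.le (by positivity)
  have hlogmul : ε * C0 * Real.log δ ≤ ε * C0 * B :=
    mul_le_mul_of_nonneg_left hlogδ hεC0.le
  clear_value t1 δ B g t0 C0
  rw [hgt1] at hgle
  have hfin : ‖σ t1‖ ^ 2 ≤ (ε / 2) ^ 2 - 1 := by linarith
  linarith
end

section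
/- Let m ≥ 1, ε > 0, d ≥ 0, q₁ > −1, b₀ = 1 + q₁, β* = d/b₀. Let σ ∈ ℝᵐ with σ ≠ 0 and ‖σ‖ < ε, let Δ be a real m×m matrix satisfying the Rayleigh lower bound q₁, and let f ∈ ℝᵐ with ‖f‖ ≤ d. Set K = K_psd(‖σ‖) = ‖σ‖/(ε − ‖σ‖), ζ = ε/(ε − ‖σ‖)², and σ̇ = −K·(I + Δ)(σ/‖σ‖) + f. Then ⟨σ, σ̇⟩ + ζ·K·⟨σ, σ̇⟩/‖σ‖ ≤ −b₀·(K − β*)·(‖σ‖ + ζ·K). -/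
theorem statement14 {m : ℕ} (hm : 1 ≤ m) (ε d q₁ : ℝ)
    (hε : 0 < ε) (hd : 0 ≤ d) (hq₁ : -1 < q₁)
    (σ f σd : EuclideanSpace ℝ (Fin m))
    (Δ : EuclideanSpace ℝ (Fin m) →L[ℝ] EuclideanSpace ℝ (Fin m))
    (hσ : σ ≠ 0) (hσε : ‖σ‖ < ε) (hΔ : RayleighLB Δ q₁) (hf : ‖f‖ ≤ d)
    (hσd : σd = -(‖σ‖ / (ε - ‖σ‖)) •
        ((ContinuousLinearMap.id ℝ (EuclideanSpace ℝ (Fin m)) + Δ) (‖σ‖⁻¹ • σ)) + f) :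
    (inner ℝ σ σd : ℝ) +
        (ε / (ε - ‖σ‖) ^ 2) * (‖σ‖ / (ε - ‖σ‖)) * (inner ℝ σ σd : ℝ) / ‖σ‖ ≤
      -(1 + q₁) * (‖σ‖ / (ε - ‖σ‖) - d / (1 + q₁)) *
        (‖σ‖ + (ε / (ε - ‖σ‖) ^ 2) * (‖σ‖ / (ε - ‖σ‖))) := by
  have hr : 0 < ‖σ‖ := norm_pos_iff.mpr hσ
  have hεr : 0 < ε - ‖σ‖ := by linarith
  have hb : 0 < 1 + q₁ := by linarith
  have hΔσ := hΔ σ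
  have hσf : (inner ℝ σ f : ℝ) ≤ ‖σ‖ * d :=
    (real_inner_le_norm σ f).trans (by nlinarith [norm_nonneg σ])
  have hA : (inner ℝ σ σd : ℝ) ≤ -(‖σ‖ / (ε - ‖σ‖)) * ((1 + q₁) * ‖σ‖) + ‖σ‖ * d := by
    rw [hσd]
    rw [inner_add_right, real_inner_smul_right, ContinuousLinearMap.add_apply,
      ContinuousLinearMap.id_apply, map_smul, inner_add_right, real_inner_smul_right,
      real_inner_smul_right, real_inner_self_eq_norm_sq]
    have hK : 0 ≤ ‖σ‖ / (ε - ‖σ‖) := by positivity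
    have h1 : (1 + q₁) * ‖σ‖ ≤ ‖σ‖⁻¹ * ‖σ‖ ^ 2 + ‖σ‖⁻¹ * (inner ℝ σ (Δ σ) : ℝ) := by
      rw [← mul_add]
      calc (1 + q₁) * ‖σ‖ = ‖σ‖⁻¹ * ((1 + q₁) * ‖σ‖ ^ 2) := by field_simp
        _ ≤ ‖σ‖⁻¹ * (‖σ‖ ^ 2 + (inner ℝ σ (Δ σ) : ℝ)) := by
            apply mul_le_mul_of_nonneg_left (by nlinarith) (by positivity)
    nlinarith
  -- now finish
  have key : (inner ℝ σ σd : ℝ) +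
      (ε / (ε - ‖σ‖) ^ 2) * (‖σ‖ / (ε - ‖σ‖)) * (inner ℝ σ σd : ℝ) / ‖σ‖ =
      (inner ℝ σ σd : ℝ) * ((‖σ‖ + (ε / (ε - ‖σ‖) ^ 2) * (‖σ‖ / (ε - ‖σ‖))) / ‖σ‖) := by
    field_simp
  have hc : 0 < ‖σ‖ + (ε / (ε - ‖σ‖) ^ 2) * (‖σ‖ / (ε - ‖σ‖)) := by positivity
  rw [key]
  have hRHS : -(1 + q₁) * (‖σ‖ / (ε - ‖σ‖) - d / (1 + q₁)) *
      (‖σ‖ + (ε / (ε - ‖σ‖) ^ 2) * (‖σ‖ / (ε - ‖σ‖))) =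
      ((-(‖σ‖ / (ε - ‖σ‖)) * ((1 + q₁) * ‖σ‖) + ‖σ‖ * d) *
      ((‖σ‖ + (ε / (ε - ‖σ‖) ^ 2) * (‖σ‖ / (ε - ‖σ‖))) / ‖σ‖)) := by
    field_simp
    ring
  rw [hRHS]
  exact mul_le_mul_of_nonneg_right hA (by positivity)
end

section
/- Let m ≥ 1, ε > 0, β̄ > 0, d ≥ 0, q₁ > −1, b₀ = 1 + q₁, β* = d/b₀. Let σ ∈ ℝᵐ with σ ≠ 0 and ‖σ‖ < ε, let Δ be a real m×m matrix satisfying the Rayleigh lower bound q₁, and let f ∈ ℝᵐ with ‖f‖ ≤ d. Set K = K_pd(‖σ‖) = β̄·ε/(ε − ‖σ‖), ζ = β̄·ε/(ε − ‖σ‖)², and σ̇ = −K·(I + Δ)(σ/‖σ‖) + f. Then ⟨σ, σ̇⟩ + ζ·(K − β̄)·⟨σ, σ̇⟩/‖σ‖ ≤ −b₀·(K − β*)·(‖σ‖ + ζ·(K − β̄)). -/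
theorem statement15 {m : ℕ} (hm : 1 ≤ m) (ε βbar d q₁ : ℝ)
    (hε : 0 < ε) (hβbar : 0 < βbar) (hd : 0 ≤ d) (hq₁ : -1 < q₁)
    (σ f σd : EuclideanSpace ℝ (Fin m))
    (Δ : EuclideanSpace ℝ (Fin m) →L[ℝ] EuclideanSpace ℝ (Fin m))
    (hσ : σ ≠ 0) (hσε : ‖σ‖ < ε) (hΔ : RayleighLB Δ q₁) (hf : ‖f‖ ≤ d)
    (hσd : σd = -(βbar * ε / (ε - ‖σ‖)) •
        ((ContinuousLinearMap.id ℝ (EuclideanSpace ℝ (Fin m)) + Δ) (‖σ‖⁻¹ • σ)) + f) :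
    (inner ℝ σ σd : ℝ) +
        (βbar * ε / (ε - ‖σ‖) ^ 2) * (βbar * ε / (ε - ‖σ‖) - βbar) *
          (inner ℝ σ σd : ℝ) / ‖σ‖ ≤
      -(1 + q₁) * (βbar * ε / (ε - ‖σ‖) - d / (1 + q₁)) *
        (‖σ‖ + (βbar * ε / (ε - ‖σ‖) ^ 2) * (βbar * ε / (ε - ‖σ‖) - βbar)) := by
  have hb : (0:ℝ) < 1 + q₁ := by linarith
  have hs : 0 < ‖σ‖ := norm_pos_iff.mpr hσ
  have hes : 0 < ε - ‖σ‖ := by linarith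
  set s := ‖σ‖ with hsdef
  set K := βbar * ε / (ε - s) with hKdef
  set ζ := βbar * ε / (ε - s) ^ 2 with hζdef
  have hKpos : 0 < K := div_pos (by positivity) hes
  have hKβ : βbar ≤ K := by
    rw [hKdef, le_div_iff₀ hes]; nlinarith
  have hζpos : 0 < ζ := div_pos (by positivity) (by positivity)
  have hinner : (inner ℝ σ σd : ℝ)
      = -K * (s⁻¹ * (s ^ 2 + (inner ℝ σ (Δ σ) : ℝ))) + (inner ℝ σ f : ℝ) := by
    rw [hσd]
    rw [inner_add_right, real_inner_smul_right, ContinuousLinearMap.add_apply,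
      ContinuousLinearMap.id_apply, map_smul, inner_add_right,
      real_inner_smul_right, real_inner_smul_right, real_inner_self_eq_norm_sq]
    ring
  have h1 : q₁ * s ^ 2 ≤ (inner ℝ σ (Δ σ) : ℝ) := hΔ σ
  have h2 : (inner ℝ σ f : ℝ) ≤ s * d := by
    calc (inner ℝ σ f : ℝ) ≤ ‖σ‖ * ‖f‖ := real_inner_le_norm σ f
    _ ≤ s * d := by apply mul_le_mul_of_nonneg_left hf hs.le
  have key : (inner ℝ σ σd : ℝ) ≤ (-(1 + q₁) * K + d) * s := by
    have hmul : s * (inner ℝ σ σd : ℝ) ≤ s * ((-(1 + q₁) * K + d) * s) := by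
      have e : s * (inner ℝ σ σd : ℝ)
          = -K * (s ^ 2 + (inner ℝ σ (Δ σ) : ℝ)) + s * (inner ℝ σ f : ℝ) := by
        rw [hinner]; field_simp
      nlinarith [mul_le_mul_of_nonneg_left h1 hKpos.le]
    exact le_of_mul_le_mul_left hmul hs
  set A := (inner ℝ σ σd : ℝ) with hA
  set t := ζ * (K - βbar) with ht
  have ht0 : 0 ≤ t := mul_nonneg hζpos.le (by linarith)
  have hLHS : A + t * A / s = A * (s + t) / s := by
    field_simp
  have hR : -(1 + q₁) * (K - d / (1 + q₁)) = -(1 + q₁) * K + d := by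
    field_simp; ring
  rw [hLHS, hR, div_le_iff₀ hs]
  have h3 := mul_le_mul_of_nonneg_right key (by linarith : (0:ℝ) ≤ s + t)
  nlinarith [h3]
end

section
/- (Finite-time comparison lemma.) Let c > 0, a ∈ ℝ, and let V : [a, ∞) → ℝ be differentiable with V(t) ≥ 0 for all t ≥ a and V'(t) ≤ −c·√(V(t)) for all t ≥ a. Then V(t) = 0 for every t ≥ a + 2·√(V(a))/c. -/
theorem statement16 (c a : ℝ) (hc : 0 < c) (V V' : ℝ → ℝ)
    (hVpos : ∀ t ≥ a, 0 ≤ V t)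
    (hVderiv : ∀ t ≥ a, HasDerivWithinAt V (V' t) (Set.Ici a) t)
    (hVdecay : ∀ t ≥ a, V' t ≤ -c * Real.sqrt (V t)) :
    ∀ t ≥ a + 2 * Real.sqrt (V a) / c, V t = 0 := by
  set T := a + 2 * Real.sqrt (V a) / c with hT
  have haT : a ≤ T := by
    have h0 : 0 ≤ 2 * Real.sqrt (V a) / c := by positivity
    show a ≤ a + 2 * Real.sqrt (V a) / c
    linarith
  -- V is antitone on Ici a
  have hVcont : ContinuousOn V (Set.Ici a) := fun x hx => (hVderiv x hx).continuousWithinAt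
  have hVanti : AntitoneOn V (Set.Ici a) := by
    apply antitoneOn_of_hasDerivWithinAt_nonpos (convex_Ici a) hVcont
    · intro x hx
      rw [interior_Ici] at hx ⊢
      exact (hVderiv x (le_of_lt hx)).mono (Set.Ioi_subset_Ici le_rfl)
    · intro x hx
      rw [interior_Ici] at hx
      have := hVdecay x (le_of_lt hx)
      have h1 : 0 ≤ Real.sqrt (V x) := Real.sqrt_nonneg _
      nlinarith
  -- key: V T = 0
  have hVT : V T = 0 := by
    by_contra h
    have hVTpos : 0 < V T := lt_of_le_of_ne (hVpos T haT) (Ne.symm h)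
    have hVs : ∀ s ∈ Set.Icc a T, 0 < V s := fun s hs =>
      lt_of_lt_of_le hVTpos (hVanti (Set.mem_Ici.mpr hs.1) (Set.mem_Ici.mpr haT) hs.2)
    -- g s = sqrt (V s) + c/2 * s is antitone on Icc a T
    set g : ℝ → ℝ := fun s => Real.sqrt (V s) + c / 2 * s with hg
    have hganti : AntitoneOn g (Set.Icc a T) := by
      apply antitoneOn_of_hasDerivWithinAt_nonpos (convex_Icc a T)
        (f' := fun s => V' s / (2 * Real.sqrt (V s)) + c / 2)
      · exact ContinuousOn.add
          (ContinuousOn.sqrt (hVcont.mono (fun x hx => Set.mem_Ici.mpr hx.1)))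
          (Continuous.continuousOn (by continuity))
      · intro x hx
        rw [interior_Icc] at hx
        have hxa : a ≤ x := le_of_lt hx.1
        have hVx : HasDerivWithinAt V (V' x) (interior (Set.Icc a T)) x := by
          rw [interior_Icc]
          exact (hVderiv x hxa).mono (fun y hy => Set.mem_Ici.mpr (le_of_lt hy.1))
        have hVxne : V x ≠ 0 := ne_of_gt (hVs x ⟨hxa, le_of_lt hx.2⟩)
        rw [interior_Icc] at hVx ⊢
        have hlin : HasDerivWithinAt (fun s => c / 2 * s) (c / 2) (Set.Ioo a T) x := by
          simpa using ((hasDerivAt_id x).const_mul (c / 2)).hasDerivWithinAt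
        exact (hVx.sqrt hVxne).add hlin
      · intro x hx
        rw [interior_Icc] at hx
        have hxa : a ≤ x := le_of_lt hx.1
        have hs : 0 < Real.sqrt (V x) := Real.sqrt_pos.mpr (hVs x ⟨hxa, le_of_lt hx.2⟩)
        have hd := hVdecay x hxa
        rw [div_add' _ _ _ (by positivity), div_nonpos_iff]
        right
        constructor
        · nlinarith
        · positivity
    have hgle : g T ≤ g a := hganti (Set.left_mem_Icc.mpr haT) (Set.right_mem_Icc.mpr haT) haT
    have hsT : Real.sqrt (V T) ≤ 0 := by
      have : c / 2 * T = c / 2 * a + Real.sqrt (V a) := by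
        rw [hT]; field_simp
      simp only [hg] at hgle
      linarith [hT]
    have : Real.sqrt (V T) = 0 := le_antisymm hsT (Real.sqrt_nonneg _)
    exact h ((Real.sqrt_eq_zero (hVpos T haT)).mp this)
  intro t ht
  exact le_antisymm (hVT ▸ hVanti (Set.mem_Ici.mpr haT) (Set.mem_Ici.mpr (le_trans haT ht)) ht)
    (hVpos t (le_trans haT ht))
end

section
/- (Forward invariance under the positive definite barrier gain.) Let m ≥ 1, ε > 0, β̄ > 0, d ≥ 0, q₁ > −1, b₀ = 1 + q₁, β* = d/b₀, and assume β̄ < β*; set s = ε(1 − β̄/β*). Let t₀ ∈ ℝ and let σ : [t₀, ∞) → ℝᵐ be differentiable with ‖σ(t₀)‖ ≤ s, such that at every t ≥ t₀ with σ(t) ≠ 0 and ‖σ(t)‖ < ε one has σ'(t) = −K_pd(‖σ(t)‖)·(I + Δ(t))(σ(t)/‖σ(t)‖) + f(t), where each Δ(t) satisfies the Rayleigh lower bound q₁ and ‖f(t)‖ ≤ d for all t. Then ‖σ(t)‖ ≤ s for every t ≥ t₀. -/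
set_option maxHeartbeats 1000000 in
theorem statement17 {m : ℕ} (hm : 1 ≤ m) (ε βbar d q₁ t₀ : ℝ)
    (hε : 0 < ε) (hβbar : 0 < βbar) (hd : 0 ≤ d) (hq₁ : -1 < q₁)
    (hβlt : βbar < d / (1 + q₁))
    (σ : ℝ → EuclideanSpace ℝ (Fin m))
    (Δ : ℝ → EuclideanSpace ℝ (Fin m) →L[ℝ] EuclideanSpace ℝ (Fin m))
    (f : ℝ → EuclideanSpace ℝ (Fin m))
    (hσdiff : DifferentiableOn ℝ σ (Set.Ici t₀))
    (hσ0 : ‖σ t₀‖ ≤ ε * (1 - βbar / (d / (1 + q₁))))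
    (hσ' : ∀ t ≥ t₀, σ t ≠ 0 → ‖σ t‖ < ε →
      HasDerivWithinAt σ
        (-(βbar * ε / (ε - ‖σ t‖)) •
            ((ContinuousLinearMap.id ℝ (EuclideanSpace ℝ (Fin m)) + Δ t)
              (‖σ t‖⁻¹ • σ t)) + f t) (Set.Ici t₀) t)
    (hΔ : ∀ t ≥ t₀, RayleighLB (Δ t) q₁)
    (hf : ∀ t ≥ t₀, ‖f t‖ ≤ d) :
    ∀ t ≥ t₀, ‖σ t‖ ≤ ε * (1 - βbar / (d / (1 + q₁))) := by
  have hb₀ : (0:ℝ) < 1 + q₁ := by linarith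
  set βs : ℝ := d / (1 + q₁) with hβs_def
  have hβs : 0 < βs := lt_trans hβbar hβlt
  have hd0 : 0 < d := by
    have := (div_pos_iff.mp hβs)
    rcases this with ⟨h1, _⟩ | ⟨_, h2⟩
    · exact h1
    · linarith
  set s : ℝ := ε * (1 - βbar / βs) with hs_def
  have hfrac : 0 < βbar / βs := div_pos hβbar hβs
  have hfrac1 : βbar / βs < 1 := (div_lt_one hβs).2 hβlt
  have hspos : 0 < s := mul_pos hε (by linarith)
  have hslt : s < ε := by
    rw [hs_def]
    nlinarith
  have hsd : s * d = ε * (d - βbar * (1 + q₁)) := by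
    rw [hs_def, hβs_def]
    field_simp
  -- derivative of σ within Ici t₀
  set σ' : ℝ → EuclideanSpace ℝ (Fin m) := fun t => derivWithin σ (Set.Ici t₀) t with hσ'def
  have hσ'mem : ∀ t ∈ Set.Ici t₀, HasDerivWithinAt σ (σ' t) (Set.Ici t₀) t := fun t ht =>
    (hσdiff t ht).hasDerivWithinAt
  -- the squared norm
  set g : ℝ → ℝ := fun t => (inner ℝ (σ t) (σ t) : ℝ) with hgdef
  set g' : ℝ → ℝ := fun t => (inner ℝ (σ t) (σ' t) : ℝ) + (inner ℝ (σ' t) (σ t) : ℝ) with hg'def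
  have hgderiv : ∀ t ∈ Set.Ici t₀, HasDerivWithinAt g (g' t) (Set.Ici t₀) t := fun t ht =>
    (hσ'mem t ht).inner ℝ (hσ'mem t ht)
  have hgcont : ContinuousOn g (Set.Ici t₀) := fun t ht =>
    (hgderiv t ht).continuousWithinAt
  have hgnorm : ∀ t, g t = ‖σ t‖ ^ 2 := fun t => real_inner_self_eq_norm_sq (σ t)
  -- key invariance for each r ∈ (s, ε)
  have key : ∀ r, s < r → r < ε → ∀ t ≥ t₀, g t ≤ r ^ 2 := by
    intro r hr1 hr2 t₁ ht₁
    have hrpos : 0 < r := lt_trans hspos hr1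
    have main := image_le_of_deriv_right_lt_deriv_boundary'
      (f := g) (f' := g') (a := t₀) (b := t₁)
      (B := fun _ => r ^ 2) (B' := fun _ => 0)
      (hgcont.mono Set.Icc_subset_Ici_self)
      (fun x hx => (hgderiv x hx.1).mono (Set.Ici_subset_Ici.2 hx.1))
      (show g t₀ ≤ r ^ 2 by
        rw [hgnorm]
        nlinarith [norm_nonneg (σ t₀), hσ0])
      continuousOn_const
      (fun x _ => hasDerivWithinAt_const x _ _)
      ?_
    · exact main (Set.right_mem_Icc.2 ht₁)
    · intro x hx hcontact
      have hxt₀ : t₀ ≤ x := hx.1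
      have hnsq : ‖σ x‖ ^ 2 = r ^ 2 := by rw [← hgnorm]; exact hcontact
      have hnorm : ‖σ x‖ = r := by
        have h1 : ‖σ x‖ ≤ r := by nlinarith [norm_nonneg (σ x)]
        have h2 : r ≤ ‖σ x‖ := by nlinarith [norm_nonneg (σ x)]
        linarith
      have hx0 : σ x ≠ 0 := by
        intro h
        rw [h, norm_zero] at hnorm
        exact absurd hnorm.symm (ne_of_gt hrpos)
      have hxε : ‖σ x‖ < ε := by rw [hnorm]; exact hr2
      have hder := hσ' x hxt₀ hx0 hxε
      have huniq : σ' x =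
          -(βbar * ε / (ε - ‖σ x‖)) •
            ((ContinuousLinearMap.id ℝ (EuclideanSpace ℝ (Fin m)) + Δ x)
              (‖σ x‖⁻¹ • σ x)) + f x := by
        rw [hσ'def]
        exact hder.derivWithin (uniqueDiffOn_Ici t₀ x hxt₀)
      set K : ℝ := βbar * ε / (ε - ‖σ x‖) with hKdef
      have hεr : 0 < ε - r := by linarith
      have hKval : K = βbar * ε / (ε - r) := by rw [hKdef, hnorm]
      have hKpos : 0 < K := by
        rw [hKval]
        exact div_pos (mul_pos hβbar hε) hεr
      -- K * (1 + q₁) > d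
      have hKbig : d < K * (1 + q₁) := by
        rw [hKval, div_mul_eq_mul_div, lt_div_iff₀ hεr]
        have h1 : d * s < d * r := mul_lt_mul_of_pos_left hr1 hd0
        linarith only [h1, hsd]
      -- compute inner product of σ x with the drift term
      have hw : ((ContinuousLinearMap.id ℝ (EuclideanSpace ℝ (Fin m)) + Δ x)
            (‖σ x‖⁻¹ • σ x)) = ‖σ x‖⁻¹ • σ x + ‖σ x‖⁻¹ • (Δ x (σ x)) := by
        simp [map_smul]
      have hinner_w : (1 + q₁) * r ≤
          (inner ℝ (σ x) ((ContinuousLinearMap.id ℝ (EuclideanSpace ℝ (Fin m)) + Δ x)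
            (‖σ x‖⁻¹ • σ x)) : ℝ) := by
        rw [hw, inner_add_right, real_inner_smul_right, real_inner_smul_right,
          real_inner_self_eq_norm_sq, hnorm]
        have hΔx := hΔ x hxt₀ (σ x)
        rw [hnorm] at hΔx
        have hrinv : (0:ℝ) < r⁻¹ := inv_pos.2 hrpos
        have : r⁻¹ * (q₁ * r ^ 2) ≤ r⁻¹ * (inner ℝ (σ x) (Δ x (σ x)) : ℝ) :=
          mul_le_mul_of_nonneg_left hΔx (le_of_lt hrinv)
        have hid : r⁻¹ * r ^ 2 = r := by field_simp
        nlinarith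
      have hinner_f : (inner ℝ (σ x) (f x) : ℝ) ≤ r * d := by
        calc (inner ℝ (σ x) (f x) : ℝ) ≤ ‖σ x‖ * ‖f x‖ := real_inner_le_norm _ _
          _ ≤ r * d := by
              rw [hnorm]
              exact mul_le_mul_of_nonneg_left (hf x hxt₀) (le_of_lt hrpos)
      have hinner_v : (inner ℝ (σ x) (σ' x) : ℝ) < 0 := by
        rw [huniq, inner_add_right, real_inner_smul_right]
        have h1 : -K * (inner ℝ (σ x) ((ContinuousLinearMap.id ℝ (EuclideanSpace ℝ (Fin m)) + Δ x)
            (‖σ x‖⁻¹ • σ x)) : ℝ) ≤ -K * ((1 + q₁) * r) := by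
          have := mul_le_mul_of_nonneg_left hinner_w (le_of_lt hKpos)
          linarith
        have h2 : -K * ((1 + q₁) * r) + r * d < 0 := by nlinarith
        linarith [hinner_f]
      have hsymm : (inner ℝ (σ' x) (σ x) : ℝ) = (inner ℝ (σ x) (σ' x) : ℝ) :=
        real_inner_comm _ _
      rw [hg'def]
      simp only
      linarith [hinner_v, hsymm]
  -- conclude
  intro t ht
  by_contra hcon
  push_neg at hcon
  set r : ℝ := min ((s + ‖σ t‖) / 2) ((s + ε) / 2) with hrdef
  have hr1 : s < r := by
    apply lt_min <;> linarith
  have hr2 : r < ε := by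
    have : r ≤ (s + ε) / 2 := min_le_right _ _
    linarith
  have hr3 : r < ‖σ t‖ := by
    have : r ≤ (s + ‖σ t‖) / 2 := min_le_left _ _
    linarith
  have := key r hr1 hr2 t ht
  rw [hgnorm] at this
  have hrpos : 0 < r := lt_trans hspos hr1
  nlinarith
end

section
/- (Barrier containment under the positive semi-definite barrier gain.) Let m ≥ 1, ε > 0, d ≥ 0, q₁ > −1, b₀ = 1 + q₁, β* = d/b₀, and set s = ε·β*/(1 + β*). Let t₀ ∈ ℝ and let σ : [t₀, ∞) → ℝᵐ be differentiable with ‖σ(t₀)‖ < ε, such that at every t ≥ t₀ with σ(t) ≠ 0 and ‖σ(t)‖ < ε one has σ'(t) = −K_psd(‖σ(t)‖)·(I + Δ(t))(σ(t)/‖σ(t)‖) + f(t), where each Δ(t) satisfies the Rayleigh lower bound q₁ and ‖f(t)‖ ≤ d for all t. Then for every t ≥ t₀, ‖σ(t)‖ ≤ max(‖σ(t₀)‖, s); in particular ‖σ(t)‖ < ε for all t ≥ t₀. -/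
set_option maxHeartbeats 1000000


private lemma statement18_aux {m : ℕ} (q₁ ε : ℝ) (v : EuclideanSpace ℝ (Fin m))
    (T : EuclideanSpace ℝ (Fin m) →L[ℝ] EuclideanSpace ℝ (Fin m))
    (w : EuclideanSpace ℝ (Fin m))
    (hT : q₁ * ‖v‖ ^ 2 ≤ (inner ℝ v (T v) : ℝ))
    (d : ℝ) (hfd : ‖w‖ ≤ d)
    (hr0 : 0 < ‖v‖) (hrε : ‖v‖ < ε)
    (hkey : d * (ε - ‖v‖) < (1 + q₁) * ‖v‖) :
    (inner ℝ v (-(‖v‖ / (ε - ‖v‖)) •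
            ((ContinuousLinearMap.id ℝ (EuclideanSpace ℝ (Fin m)) + T)
              (‖v‖⁻¹ • v)) + w) : ℝ) < 0 := by
  set r := ‖v‖ with hr
  have hεr : 0 < ε - r := by linarith
  rw [inner_add_right, real_inner_smul_right]
  rw [ContinuousLinearMap.add_apply, ContinuousLinearMap.id_apply, map_smul]
  rw [inner_add_right, real_inner_smul_right, real_inner_smul_right]
  have h1 : (inner ℝ v v : ℝ) = r ^ 2 := real_inner_self_eq_norm_sq v
  have h3 : (inner ℝ v w : ℝ) ≤ r * d := by
    calc (inner ℝ v w : ℝ) ≤ ‖v‖ * ‖w‖ := real_inner_le_norm v w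
    _ ≤ r * d := mul_le_mul le_rfl hfd (norm_nonneg _) hr0.le
  rw [h1]
  have hrinv : r⁻¹ * r ^ 2 = r := by field_simp
  have hA : (1 + q₁) * r ≤ r⁻¹ * (r ^ 2 + (inner ℝ v (T v) : ℝ)) := by
    rw [mul_add]
    have h4 : r⁻¹ * (inner ℝ v (T v) : ℝ) ≥ r⁻¹ * (q₁ * r ^ 2) :=
      mul_le_mul_of_nonneg_left hT (by positivity)
    have h5 : r⁻¹ * (q₁ * r ^ 2) = q₁ * r := by field_simp
    nlinarith [hrinv]
  have hpos : 0 < r / (ε - r) := by positivity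
  have hmain : d * r < r / (ε - r) * ((1 + q₁) * r) := by
    rw [div_mul_eq_mul_div, lt_div_iff₀ hεr]
    nlinarith
  have h6 := mul_le_mul_of_nonneg_left hA hpos.le
  nlinarith

theorem statement18 {m : ℕ} (hm : 1 ≤ m) (ε d q₁ t₀ : ℝ)
    (hε : 0 < ε) (hd : 0 ≤ d) (hq₁ : -1 < q₁)
    (σ : ℝ → EuclideanSpace ℝ (Fin m))
    (Δ : ℝ → EuclideanSpace ℝ (Fin m) →L[ℝ] EuclideanSpace ℝ (Fin m))
    (f : ℝ → EuclideanSpace ℝ (Fin m))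
    (hσdiff : DifferentiableOn ℝ σ (Set.Ici t₀))
    (hσ0 : ‖σ t₀‖ < ε)
    (hσ' : ∀ t ≥ t₀, σ t ≠ 0 → ‖σ t‖ < ε →
      HasDerivWithinAt σ
        (-(‖σ t‖ / (ε - ‖σ t‖)) •
            ((ContinuousLinearMap.id ℝ (EuclideanSpace ℝ (Fin m)) + Δ t)
              (‖σ t‖⁻¹ • σ t)) + f t) (Set.Ici t₀) t)
    (hΔ : ∀ t ≥ t₀, RayleighLB (Δ t) q₁)
    (hf : ∀ t ≥ t₀, ‖f t‖ ≤ d) :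
    (∀ t ≥ t₀, ‖σ t‖ ≤
      max ‖σ t₀‖ (ε * (d / (1 + q₁)) / (1 + d / (1 + q₁)))) ∧
    (∀ t ≥ t₀, ‖σ t‖ < ε) := by
  classical
  have hb₀ : (0:ℝ) < 1 + q₁ := by linarith
  have hbd : (0:ℝ) < 1 + q₁ + d := by linarith
  set s : ℝ := ε * d / (1 + q₁ + d) with hs_def
  have hs_eq : ε * (d / (1 + q₁)) / (1 + d / (1 + q₁)) = s := by
    rw [hs_def]; field_simp
  have hs_nonneg : 0 ≤ s := by positivity
  have hs_lt : s < ε := by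
    rw [hs_def, div_lt_iff₀ hbd]; nlinarith
  set M : ℝ := max ‖σ t₀‖ s with hM_def
  have hM0 : 0 ≤ M := le_trans hs_nonneg (le_max_right _ _)
  have hMε : M < ε := max_lt hσ0 hs_lt
  have hsM : s ≤ M := le_max_right _ _
  have hσ0M : ‖σ t₀‖ ≤ M := le_max_left _ _
  -- key step: for every δ > 0 with M + δ < ε, the norm stays below M + δ
  have key : ∀ t ≥ t₀, ∀ δ : ℝ, 0 < δ → M + δ < ε → ‖σ t‖ ≤ M + δ := by
    intro b hb δ hδ hδε
    have hcontσ : ContinuousOn σ (Set.Icc t₀ b) :=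
      (hσdiff.continuousOn).mono Set.Icc_subset_Ici_self
    have hcont : ContinuousOn (fun t => (inner ℝ (σ t) (σ t) : ℝ)) (Set.Icc t₀ b) :=
      hcontσ.inner hcontσ
    have hf'def : ∀ x ∈ Set.Ico t₀ b,
        HasDerivWithinAt (fun t => (inner ℝ (σ t) (σ t) : ℝ))
          ((fun x => (inner ℝ (σ x) (derivWithin σ (Set.Ici t₀) x) : ℝ) +
            (inner ℝ (derivWithin σ (Set.Ici t₀) x) (σ x) : ℝ)) x) (Set.Ici x) x := by
      intro x hx
      have hdx : HasDerivWithinAt σ (derivWithin σ (Set.Ici t₀) x) (Set.Ici t₀) x :=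
        (hσdiff x hx.1).hasDerivWithinAt
      have hdx' := hdx.mono (Set.Ici_subset_Ici.2 hx.1)
      exact hdx'.inner ℝ hdx'
    have main := image_le_of_deriv_right_lt_deriv_boundary
      (f := fun t => (inner ℝ (σ t) (σ t) : ℝ))
      (f' := fun x => (inner ℝ (σ x) (derivWithin σ (Set.Ici t₀) x) : ℝ) +
            (inner ℝ (derivWithin σ (Set.Ici t₀) x) (σ x) : ℝ))
      (B := fun _ => (M + δ)^2) (B' := fun _ => 0) (a := t₀) (b := b)
      hcont hf'def ?ha (fun x => hasDerivAt_const x _) ?bound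
    case ha =>
      show (inner ℝ (σ t₀) (σ t₀) : ℝ) ≤ (M + δ) ^ 2
      rw [real_inner_self_eq_norm_sq (σ t₀)]
      nlinarith [norm_nonneg (σ t₀)]
    case bound =>
      intro x hx hfx0
      have hfx : (inner ℝ (σ x) (σ x) : ℝ) = (M + δ) ^ 2 := hfx0
      show (inner ℝ (σ x) (derivWithin σ (Set.Ici t₀) x) : ℝ) +
        (inner ℝ (derivWithin σ (Set.Ici t₀) x) (σ x) : ℝ) < 0
      -- on the boundary, the norm equals M + δ
      have hnx : (inner ℝ (σ x) (σ x) : ℝ) = ‖σ x‖ ^ 2 := real_inner_self_eq_norm_sq _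
      have hr2 : ‖σ x‖ ^ 2 = (M + δ) ^ 2 := by rw [← hnx]; exact hfx
      have hMδ : 0 < M + δ := by linarith
      have hrval : ‖σ x‖ = M + δ := by
        have h1 : ‖σ x‖ ≤ M + δ := by nlinarith [norm_nonneg (σ x)]
        have h2 : M + δ ≤ ‖σ x‖ := by nlinarith [norm_nonneg (σ x)]
        linarith
      have hr0 : 0 < ‖σ x‖ := by rw [hrval]; exact hMδ
      have hrε : ‖σ x‖ < ε := by rw [hrval]; exact hδε
      have hne : σ x ≠ 0 := by
        intro h; rw [h, norm_zero] at hr0; exact lt_irrefl _ hr0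
      have hD := hσ' x hx.1 hne hrε
      have hDW : derivWithin σ (Set.Ici t₀) x =
          -(‖σ x‖ / (ε - ‖σ x‖)) •
            ((ContinuousLinearMap.id ℝ (EuclideanSpace ℝ (Fin m)) + Δ x)
              (‖σ x‖⁻¹ • σ x)) + f x :=
        hD.derivWithin (uniqueDiffOn_Ici t₀ x hx.1)
      rw [hDW]
      have hlevel : d * (ε - ‖σ x‖) < (1 + q₁) * ‖σ x‖ := by
        have hrs : s < ‖σ x‖ := by rw [hrval]; linarith
        have hsid : s * (1 + q₁ + d) = ε * d := by
          rw [hs_def]; field_simp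
        nlinarith
      have hkeyin := statement18_aux q₁ ε (σ x) (Δ x) (f x)
        (hΔ x hx.1 (σ x)) d (hf x hx.1) hr0 hrε hlevel
      have hcomm : (inner ℝ (σ x)
          (-(‖σ x‖ / (ε - ‖σ x‖)) •
            ((ContinuousLinearMap.id ℝ (EuclideanSpace ℝ (Fin m)) + Δ x)
              (‖σ x‖⁻¹ • σ x)) + f x) : ℝ) = (inner ℝ
          (-(‖σ x‖ / (ε - ‖σ x‖)) •
            ((ContinuousLinearMap.id ℝ (EuclideanSpace ℝ (Fin m)) + Δ x)
              (‖σ x‖⁻¹ • σ x)) + f x) (σ x) : ℝ) := real_inner_comm _ _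
      rw [← hcomm]
      linarith
    have hmb := main (Set.right_mem_Icc.2 hb)
    have hnb : (inner ℝ (σ b) (σ b) : ℝ) = ‖σ b‖ ^ 2 := real_inner_self_eq_norm_sq _
    have hmb' : ‖σ b‖ ^ 2 ≤ (M + δ) ^ 2 := by rw [← hnb]; exact hmb
    nlinarith [norm_nonneg (σ b)]
  have hboundM : ∀ t ≥ t₀, ‖σ t‖ ≤ M := by
    intro t ht
    by_contra h
    push_neg at h
    set δ : ℝ := min ((‖σ t‖ - M) / 2) ((ε - M) / 2) with hδdef
    have hδ0 : 0 < δ := by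
      apply lt_min <;> linarith
    have hδ1 : δ ≤ (‖σ t‖ - M) / 2 := min_le_left _ _
    have hδ2 : δ ≤ (ε - M) / 2 := min_le_right _ _
    have := key t ht δ hδ0 (by linarith)
    linarith
  constructor
  · intro t ht
    have := hboundM t ht
    rw [hs_eq]
    exact this
  · intro t ht
    exact lt_of_le_of_lt (hboundM t ht) hMε
end
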